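/- arXiv:2007.04642 — 10 statements merged into one kernel-verified Lean document; each statement's English description precedes it below -/
import Mathlib

section
/- Let G be a finite group and let R be a field such that either char(R) = 0 or char(R) = p where p does not divide the order of G. Let σ and τ be R-algebra endomorphisms of the group algebra RG that fix the center Z(RG) pointwise. Then every R-linear (σ,τ)-derivation of RG is (σ,τ)-inner (equivalently, H¹(RG, ₛRGₜ) = 0 for the twisted bimodule). -/
/-- Let `G` be a finite group and `R` a field whose characteristic is either `0`
or a prime `p` not dividing `|G|`. If `σ, τ` are `R`-algebra endomorphisms of the group algebra
`R[G]` fixing the center of `R[G]` pointwise, then every `R`-linear `(σ,τ)`-derivation of `R[G]`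
is `(σ,τ)`-inner. -/
theorem twisted_derivation_inner_field {R G : Type*} [Field R] [Group G] [Fintype G]
    (hchar : ∀ p : ℕ, p.Prime → CharP R p → ¬ (p ∣ Fintype.card G))
    (σ τ : MonoidAlgebra R G →ₐ[R] MonoidAlgebra R G)
    (hσ : ∀ x ∈ Subring.center (MonoidAlgebra R G), σ x = x)
    (hτ : ∀ x ∈ Subring.center (MonoidAlgebra R G), τ x = x)
    (δ : MonoidAlgebra R G →ₗ[R] MonoidAlgebra R G)
    (hδ : ∀ a b : MonoidAlgebra R G, δ (a * b) = δ a * τ b + σ a * δ b) :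
    ∃ x : MonoidAlgebra R G, ∀ a : MonoidAlgebra R G, δ a = x * τ a - σ a * x := by
  classical
  set n := Fintype.card G with hn_def
  have hn : (n : R) ≠ 0 := by
    intro h
    obtain ⟨p, hp⟩ := CharP.exists R
    rcases CharP.char_is_prime_or_zero R p with hpp | rfl
    · exact hchar p hpp hp ((CharP.cast_eq_zero_iff R p n).mp h)
    · haveI : CharZero R := CharP.charP_to_charZero R
      exact Nat.cast_ne_zero.mpr Fintype.card_ne_zero h
  set of := MonoidAlgebra.of R G with hof
  set S : MonoidAlgebra R G := ∑ g : G, δ (of g) * τ (of g⁻¹) with hS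
  set x : MonoidAlgebra R G := (n : R)⁻¹ • S with hx
  refine ⟨x, ?_⟩
  have key : ∀ h : G, δ (of h) = x * τ (of h) - σ (of h) * x := by
    intro h
    have hστ : ∀ g : G, σ (of h) * (δ (of g) * τ (of g⁻¹)) =
        δ (of (h * g)) * τ (of (h * g)⁻¹) * τ (of h) - δ (of h) := by
      intro g
      have h1 : δ (of (h * g)) = δ (of h) * τ (of g) + σ (of h) * δ (of g) := by
        rw [map_mul, hδ]
      have h2 : τ (of (h * g)⁻¹) * τ (of h) = τ (of g⁻¹) := by
        rw [← map_mul, ← map_mul]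
        congr 1
        simp [mul_inv_rev, mul_assoc]
      have h3 : τ (of g) * τ (of g⁻¹) = 1 := by
        rw [← map_mul, ← map_mul]
        simp
      calc σ (of h) * (δ (of g) * τ (of g⁻¹))
          = (δ (of (h * g)) - δ (of h) * τ (of g)) * τ (of g⁻¹) := by
            rw [h1]; noncomm_ring
        _ = δ (of (h * g)) * τ (of g⁻¹) - δ (of h) * (τ (of g) * τ (of g⁻¹)) := by noncomm_ring
        _ = δ (of (h * g)) * τ (of (h * g)⁻¹) * τ (of h) - δ (of h) := by
            rw [h3, mul_one, mul_assoc, h2]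
    have hsum : σ (of h) * S = S * τ (of h) - n • δ (of h) := by
      rw [hS, Finset.mul_sum]
      rw [Finset.sum_congr rfl (fun g _ => hστ g)]
      rw [Finset.sum_sub_distrib, Finset.sum_const, Finset.card_univ, ← hn_def]
      congr 1
      rw [← Finset.sum_mul]
      congr 1
      exact Equiv.sum_comp (Equiv.mulLeft h) (fun g => δ (of g) * τ (of g⁻¹))
    have : x * τ (of h) - σ (of h) * x = (n : R)⁻¹ • (n • δ (of h)) := by
      rw [hx, smul_mul_assoc, mul_smul_comm, ← smul_sub]
      congr 1
      rw [hsum]; abel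
    rw [this, ← Nat.cast_smul_eq_nsmul R n, smul_smul, inv_mul_cancel₀ hn, one_smul]
  -- extend to all of the group algebra by linearity
  let L : MonoidAlgebra R G →ₗ[R] MonoidAlgebra R G :=
    { toFun := fun a => x * τ a - σ a * x
      map_add' := fun a b => by simp only [map_add]; noncomm_ring
      map_smul' := fun r a => by simp [map_smul, smul_sub, mul_smul_comm, smul_mul_assoc] }
  have hL : δ = L := by
    apply MonoidAlgebra.lhom_ext'
    intro a
    apply LinearMap.ext
    intro b
    simp only [LinearMap.comp_apply, MonoidAlgebra.lsingle_apply]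
    have hsingle : (MonoidAlgebra.single a b : MonoidAlgebra R G) = b • of a := by
      simp [hof, MonoidAlgebra.of_apply, Finsupp.smul_single, smul_eq_mul]
    rw [hsingle, map_smul, map_smul, key a]
    rfl
  intro a
  rw [hL]
  rfl
end

section
/- Let G be a finite group and let R be an integral domain with 1 which is not a field, such that either R has no additive torsion elements or, if R has p-torsion elements for a prime p, then p does not divide the order of G. Let σ and τ be the R-linear extensions to RG of group homomorphisms G → G, and suppose σ and τ fix the center Z(RG) pointwise. Then every R-linear (σ,τ)-derivation of RG is (σ,τ)-inner. -/
namespace TwistAux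
variable {G : Type*} [Group G] (s t : G →* G)

/-- Equivalence relation on `G`: `u ~ v` iff `v = s h * u * (t h)⁻¹` for some `h`. -/
def twSetoid : Setoid G where
  r u v := ∃ h : G, s h * u * (t h)⁻¹ = v
  iseqv := by
    constructor
    · intro u; exact ⟨1, by simp⟩
    · rintro u v ⟨h, rfl⟩
      exact ⟨h⁻¹, by simp [mul_assoc]⟩
    · rintro u v w ⟨h, rfl⟩ ⟨k, rfl⟩
      exact ⟨k * h, by simp [mul_assoc, mul_inv_rev]⟩

noncomputable def rep (u : G) : G := (Quotient.mk (twSetoid s t) u).out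

theorem rep_rel (u : G) : ∃ h : G, s h * rep s t u * (t h)⁻¹ = u :=
  Quotient.mk_out (s := twSetoid s t) u

theorem rep_eq (u : G) (h : G) : rep s t (s h * u * (t h)⁻¹) = rep s t u := by
  have : Quotient.mk (twSetoid s t) (s h * u * (t h)⁻¹) = Quotient.mk (twSetoid s t) u :=
    Quotient.sound ((twSetoid s t).symm ⟨h, rfl⟩)
  simp [rep, this]

theorem add_app {R : Type*} [CommRing R] (a b : MonoidAlgebra R G) (u : G) :
    (a + b).coeff u = a.coeff u + b.coeff u := rfl

theorem sub_app {R : Type*} [CommRing R] (a b : MonoidAlgebra R G) (u : G) :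
    (a - b).coeff u = a.coeff u - b.coeff u := rfl

theorem nsmul_app {R : Type*} [CommRing R] (n : ℕ) (a : MonoidAlgebra R G) (u : G) :
    (n • a).coeff u = n • (a.coeff u) := rfl

theorem rsmul_app {R : Type*} [CommRing R] (r : R) (a : MonoidAlgebra R G) (u : G) :
    (r • a).coeff u = r • (a.coeff u) := rfl

end TwistAux

/-- Let `G` be a finite group and `R` an integral domain with `1` which is not a
field, such that if `R` has `p`-torsion elements for a prime `p` then `p ∤ |G|`. If `σ, τ` are the
`R`-linear extensions to `R[G]` of group homomorphisms `s, t : G → G` and they fix the center of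
`R[G]` pointwise, then every `R`-linear `(σ,τ)`-derivation of `R[G]` is `(σ,τ)`-inner. -/
theorem twisted_derivation_inner_domain {R G : Type*} [CommRing R] [IsDomain R]
    (hnf : ¬ IsField R) [Group G] [Fintype G]
    (htor : ∀ p : ℕ, p.Prime → (∃ r : R, r ≠ 0 ∧ p • r = 0) → ¬ (p ∣ Fintype.card G))
    (s t : G →* G)
    (hσ : ∀ x ∈ Subring.center (MonoidAlgebra R G),
      MonoidAlgebra.mapDomainAlgHom R R s x = x)
    (hτ : ∀ x ∈ Subring.center (MonoidAlgebra R G),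
      MonoidAlgebra.mapDomainAlgHom R R t x = x)
    (δ : MonoidAlgebra R G →ₗ[R] MonoidAlgebra R G)
    (hδ : ∀ a b : MonoidAlgebra R G,
      δ (a * b) = δ a * MonoidAlgebra.mapDomainAlgHom R R t b
        + MonoidAlgebra.mapDomainAlgHom R R s a * δ b) :
    ∃ x : MonoidAlgebra R G, ∀ a : MonoidAlgebra R G,
      δ a = x * MonoidAlgebra.mapDomainAlgHom R R t a
        - MonoidAlgebra.mapDomainAlgHom R R s a * x := by
  classical
  set n := Fintype.card G with hndef
  set τ := MonoidAlgebra.mapDomainAlgHom R R t with hτdef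
  set σ' := MonoidAlgebra.mapDomainAlgHom R R s with hσdef
  -- `n` is nonzero in `R`
  have hn : (n : R) ≠ 0 := by
    intro h0
    have hcp : CharP R (ringChar R) := ringChar.charP R
    have hdvd : ringChar R ∣ n := (CharP.cast_eq_zero_iff R (ringChar R) n).mp h0
    rcases CharP.char_is_prime_or_zero R (ringChar R) with hp | hz
    · exact htor (ringChar R) hp ⟨1, one_ne_zero, by
        simp [nsmul_eq_mul, CharP.cast_eq_zero R (ringChar R)]⟩ hdvd
    · rw [hz] at hdvd
      have : n = 0 := zero_dvd_iff.mp hdvd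
      exact Fintype.card_ne_zero this
  have hτof : ∀ g : G, τ (MonoidAlgebra.of R G g) = MonoidAlgebra.of R G (t g) := by
    intro g
    simp [hτdef, MonoidAlgebra.of_apply]
  have hσof : ∀ g : G, σ' (MonoidAlgebra.of R G g) = MonoidAlgebra.of R G (s g) := by
    intro g
    simp [hσdef, MonoidAlgebra.of_apply]
  have hder : ∀ h g : G, MonoidAlgebra.of R G (s h) * δ (MonoidAlgebra.of R G g)
      = δ (MonoidAlgebra.of R G (h * g))
        - δ (MonoidAlgebra.of R G h) * MonoidAlgebra.of R G (t g) := by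
    intro h g
    have h1 := hδ (MonoidAlgebra.of R G h) (MonoidAlgebra.of R G g)
    rw [← map_mul, hτof, hσof] at h1
    rw [h1, add_sub_cancel_left]
  set x : MonoidAlgebra R G :=
    ∑ g : G, δ (MonoidAlgebra.of R G g) * MonoidAlgebra.of R G ((t g)⁻¹) with hxdef
  have key : ∀ h : G, MonoidAlgebra.of R G (s h) * x
      = x * MonoidAlgebra.of R G (t h) - n • δ (MonoidAlgebra.of R G h) := by
    intro h
    have e1 : MonoidAlgebra.of R G (s h) * x
        = (∑ g : G, δ (MonoidAlgebra.of R G (h * g)) * MonoidAlgebra.of R G ((t g)⁻¹))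
          - n • δ (MonoidAlgebra.of R G h) := by
      rw [hxdef, Finset.mul_sum]
      rw [show (∑ g : G, MonoidAlgebra.of R G (s h)
          * (δ (MonoidAlgebra.of R G g) * MonoidAlgebra.of R G ((t g)⁻¹)))
        = ∑ g : G, (δ (MonoidAlgebra.of R G (h * g)) * MonoidAlgebra.of R G ((t g)⁻¹)
            - δ (MonoidAlgebra.of R G h)) from Finset.sum_congr rfl (by
          intro g _
          rw [← mul_assoc, hder h g, sub_mul, mul_assoc, ← map_mul, mul_inv_cancel,
            map_one, mul_one])]
      rw [Finset.sum_sub_distrib, Finset.sum_const, Finset.card_univ]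
    rw [e1]
    congr 1
    -- reindex sum
    rw [show (∑ g : G, δ (MonoidAlgebra.of R G (h * g)) * MonoidAlgebra.of R G ((t g)⁻¹))
        = ∑ u : G, δ (MonoidAlgebra.of R G u)
            * MonoidAlgebra.of R G ((t u)⁻¹ * t h) from
      Fintype.sum_equiv (Equiv.mulLeft h) _ _ (by
        intro g
        simp [mul_inv_rev, mul_assoc])]
    rw [hxdef, Finset.sum_mul]
    refine Finset.sum_congr rfl (fun g _ => ?_)
    rw [map_mul, mul_assoc]
  -- coefficientwise version of `key`
  have keyc : ∀ h u : G, x.coeff u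
      = x.coeff (s h * u * (t h)⁻¹) - (n : R) * (δ (MonoidAlgebra.of R G h)).coeff (s h * u) := by
    intro h u
    have e := Finsupp.ext_iff.mp (congrArg MonoidAlgebra.coeff (key h)) (s h * u)
    simp only [MonoidAlgebra.of_apply, MonoidAlgebra.coeff_single_mul_apply,
      MonoidAlgebra.coeff_mul_single_apply, Finsupp.sub_apply, Finsupp.smul_apply,
      inv_mul_cancel_left, one_mul, mul_one, TwistAux.sub_app, TwistAux.nsmul_app] at e
    rw [MonoidAlgebra.of_apply, e, nsmul_eq_mul]
  -- divisibility of `x u - x (rep u)` by `n`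
  have hdiv : ∀ u : G, ∃ c : R, x.coeff u = x.coeff (TwistAux.rep s t u) + (n : R) * c := by
    intro u
    obtain ⟨h, hh⟩ := TwistAux.rep_rel s t u
    refine ⟨(δ (MonoidAlgebra.of R G h)).coeff (s h * TwistAux.rep s t u), ?_⟩
    have := keyc h (TwistAux.rep s t u)
    rw [hh] at this
    rw [this]; ring
  choose c hc using hdiv
  set z : MonoidAlgebra R G :=
    MonoidAlgebra.ofCoeff (Finsupp.equivFunOnFinite.symm (fun u => x.coeff (TwistAux.rep s t u))) with hzdef
  set y : MonoidAlgebra R G := MonoidAlgebra.ofCoeff (Finsupp.equivFunOnFinite.symm c) with hydef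
  have hz : ∀ u, z.coeff u = x.coeff (TwistAux.rep s t u) := fun u => rfl
  have hy : ∀ u, y.coeff u = c u := fun u => rfl
  have hxyz : x = n • y + z := by
    ext u
    rw [TwistAux.add_app, TwistAux.nsmul_app, hz, hy, hc u, nsmul_eq_mul]
    ring
  -- `z` intertwines σ and τ on group elements
  have hzcomm : ∀ h : G, MonoidAlgebra.of R G (s h) * z
      = z * MonoidAlgebra.of R G (t h) := by
    intro h
    ext u
    simp only [MonoidAlgebra.of_apply, MonoidAlgebra.coeff_single_mul_apply,
      MonoidAlgebra.coeff_mul_single_apply, one_mul, mul_one]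
    rw [hz, hz]
    congr 1
    have := TwistAux.rep_eq s t (u * (t h)⁻¹) h⁻¹
    rw [show s h⁻¹ * (u * (t h)⁻¹) * (t h⁻¹)⁻¹ = (s h)⁻¹ * u by
      simp [mul_assoc]] at this
    exact this
  -- single g r = r • of g
  have hsingle : ∀ (g : G) (r : R),
      (MonoidAlgebra.single g r : MonoidAlgebra R G) = r • MonoidAlgebra.of R G g := by
    intro g r
    rw [MonoidAlgebra.of_apply, MonoidAlgebra.smul_single, smul_eq_mul, mul_one]
  -- extend key to all a
  have keyA : ∀ a : MonoidAlgebra R G, σ' a * x = x * τ a - n • δ a := by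
    intro a
    induction a using MonoidAlgebra.induction_linear with
    | zero => simp
    | add a b ha hb =>
      rw [map_add, map_add, map_add, add_mul, mul_add, ha, hb, smul_add]
      abel
    | single g r =>
      rw [hsingle, map_smul, map_smul, map_smul, smul_mul_assoc, mul_smul_comm,
        hσof, hτof, key g, smul_sub, smul_comm n r]
  -- extend hzcomm to all a
  have hzA : ∀ a : MonoidAlgebra R G, σ' a * z = z * τ a := by
    intro a
    induction a using MonoidAlgebra.induction_linear with
    | zero => simp
    | add a b ha hb => rw [map_add, map_add, add_mul, mul_add, ha, hb]
    | single g r =>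
      rw [hsingle, map_smul, map_smul, smul_mul_assoc, mul_smul_comm, hσof, hτof,
        hzcomm g]
  -- cancellation of n
  have hzero : ∀ v : MonoidAlgebra R G, n • v = 0 → v = 0 := by
    intro v hv
    ext u
    have h1 : (n • v).coeff u = (0 : MonoidAlgebra R G).coeff u := by rw [hv]
    rw [TwistAux.nsmul_app, nsmul_eq_mul] at h1
    have h2 : (n : R) * v.coeff u = 0 := by simpa using h1
    rcases mul_eq_zero.mp h2 with h | h
    · exact absurd h hn
    · simpa using h
  refine ⟨y, fun a => ?_⟩
  have h1 := keyA a
  rw [hxyz, mul_add, add_mul] at h1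
  rw [hzA a] at h1
  -- h1 : σ' a * (n • y) + z * τ a = (n • y) * τ a + z * τ a - n • δ a
  have h4 : (n • y) * τ a - σ' a * (n • y) = n • δ a := by
    rw [← add_sub_add_right_eq_sub ((n • y) * τ a) (σ' a * (n • y)) (z * τ a), h1,
      sub_sub_cancel]
  have h3 : n • (y * τ a - σ' a * y) = n • δ a := by
    rw [smul_sub, ← smul_mul_assoc, ← mul_smul_comm]
    exact h4
  have h5 : n • (δ a - (y * τ a - σ' a * y)) = 0 := by
    rw [smul_sub, ← h3, sub_self]
  have h6 := hzero _ h5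
  have h7 : δ a = y * τ a - σ' a * y := by
    have := sub_eq_zero.mp h6
    exact this
  exact h7
end

section
/- Let A be a finite-dimensional central simple algebra with 1 over a field F, and let σ and τ be nonzero F-algebra endomorphisms of A. Then every F-linear (σ,τ)-derivation of A is (σ,τ)-inner (equivalently, H¹(A, ₛAₜ) = 0). -/
open TensorProduct

namespace TwistedCSA

variable (F A : Type*) [Field F] [Ring A] [Algebra F A]

noncomputable def Phi : (A ⊗[F] Aᵐᵒᵖ) →ₐ[F] Module.End F A :=
  Algebra.TensorProduct.lift (Algebra.lmul F A) (Algebra.lsmul F F A)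
    (fun a b => LinearMap.ext fun x => show a * (b • x) = b • (a * x) by
      simp [MulOpposite.smul_eq_mul_unop, mul_assoc])

@[simp] lemma Phi_tmul (a : A) (b : Aᵐᵒᵖ) (x : A) :
    Phi F A (a ⊗ₜ b) x = a * x * b.unop := by
  show a * (b • x) = _
  simp [MulOpposite.smul_eq_mul_unop, mul_assoc]

noncomputable def rmod : Module (A ⊗[F] Aᵐᵒᵖ) A := Module.compHom A (Phi F A).toRingHom

lemma rmod_smul_def (r : A ⊗[F] Aᵐᵒᵖ) (x : A) :
    letI := rmod F A
    r • x = Phi F A r x := rfl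

lemma isSimpleModule_rmod [IsSimpleRing A] :
    letI := rmod F A
    IsSimpleModule (A ⊗[F] Aᵐᵒᵖ) A := by
  letI := rmod F A
  haveI : Nontrivial (Submodule (A ⊗[F] Aᵐᵒᵖ) A) :=
    ⟨⊥, ⊤, fun h => one_ne_zero (α := A) (by
      have : (1 : A) ∈ (⊤ : Submodule (A ⊗[F] Aᵐᵒᵖ) A) := trivial
      rw [← h] at this
      simpa using this)⟩
  rw [isSimpleModule_iff]
  refine { eq_bot_or_eq_top := ?_ }
  intro p
  have hL : ∀ (a x : A), x ∈ p → a * x ∈ p := fun a x hx => by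
    have := p.smul_mem (a ⊗ₜ (1 : Aᵐᵒᵖ)) hx
    rwa [rmod_smul_def, Phi_tmul, MulOpposite.unop_one, mul_one] at this
  have hR : ∀ (b x : A), x ∈ p → x * b ∈ p := fun b x hx => by
    have := p.smul_mem ((1 : A) ⊗ₜ (MulOpposite.op b)) hx
    rwa [rmod_smul_def, Phi_tmul, MulOpposite.unop_op, one_mul] at this
  let I : TwoSidedIdeal A := TwoSidedIdeal.mk' (p : Set A) p.zero_mem
    (fun ha hb => p.add_mem ha hb) (fun {x} hx => by have := hL (-1) x hx; simpa using this)
    (fun {a b} hb => hL a b hb) (fun {a b} ha => hR b a ha)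
  have hmem : ∀ x : A, x ∈ I ↔ x ∈ p := fun x =>
    TwoSidedIdeal.mem_mk' _ _ _ _ _ _ x
  rcases IsSimpleRing.simple.eq_bot_or_eq_top I with h | h
  · left
    rw [eq_bot_iff]
    intro x hx
    have : x ∈ I := (hmem x).2 hx
    rw [h, TwoSidedIdeal.mem_bot] at this
    simpa using this
  · right
    rw [eq_top_iff]
    intro x _
    exact (hmem x).1 (h ▸ TwoSidedIdeal.mem_top A)

/-- Every `(A,A)`-bimodule endomorphism of `A` is (left) multiplication by a central element. -/
lemma endo_scalar [Algebra.IsCentral F A] :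
    letI := rmod F A
    ∀ f : A →ₗ[A ⊗[F] Aᵐᵒᵖ] A, ∃ c : F, ∀ x : A, f x = c • x := by
  letI := rmod F A
  intro f
  have hL : ∀ a x : A, f (a * x) = a * f x := fun a x => by
    have := f.map_smul (a ⊗ₜ (1 : Aᵐᵒᵖ)) x
    simpa [rmod_smul_def] using this
  have hR : ∀ b x : A, f (x * b) = f x * b := fun b x => by
    have := f.map_smul ((1 : A) ⊗ₜ (MulOpposite.op b)) x
    simpa [rmod_smul_def] using this
  have h1 : ∀ x : A, f x = x * f 1 := fun x => by
    have := hL x 1; simpa using this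
  have h2 : ∀ x : A, f x = f 1 * x := fun x => by
    have := hR x 1; simpa using this
  have hc : f 1 ∈ Subalgebra.center F A := by
    rw [Subalgebra.mem_center_iff]
    intro b
    rw [← h1 b, ← h2 b]
  rw [Algebra.IsCentral.center_eq_bot, Algebra.mem_bot] at hc
  obtain ⟨c, hc⟩ := hc
  exact ⟨c, fun x => by rw [h1 x, ← hc, ← Algebra.commutes, Algebra.smul_def]⟩

theorem Phi_surjective [FiniteDimensional F A] [IsSimpleRing A] [Algebra.IsCentral F A] :
    Function.Surjective (Phi F A) := by
  letI := rmod F A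
  haveI := isSimpleModule_rmod F A
  set R := A ⊗[F] Aᵐᵒᵖ
  set n := Module.finrank F A
  let b : Module.Basis (Fin n) F A := Module.finBasis F A
  -- V = Aⁿ is a semisimple R-module
  haveI hss : IsSemisimpleModule R (Fin n → A) := by
    refine isSemisimpleModule_of_isSemisimpleModule_submodule'
      (p := fun i => LinearMap.range (LinearMap.single R (fun _ : Fin n => A) i)) (fun i => ?_) ?_
    · haveI : IsSemisimpleModule R A := inferInstance
      exact IsSemisimpleModule.range _
    · simp_rw [LinearMap.range_eq_map, Submodule.iSup_map_single, Submodule.pi_top]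
  -- the cyclic submodule generated by the basis vector tuple
  set v : Fin n → A := fun i => b i with hv
  set W : Submodule R (Fin n → A) := Submodule.span R {v} with hW
  obtain ⟨W', hc⟩ := exists_isCompl W
  set e : (Fin n → A) →ₗ[R] (Fin n → A) :=
    W.subtype.comp (W.projectionOnto W' hc) with he
  have heW : ∀ x, e x ∈ W := fun x => (W.projectionOnto W' hc x).2
  have heid : ∀ w ∈ W, e w = w := fun w hw => by
    simp [he, Submodule.projectionOnto_apply_left hc ⟨w, hw⟩]
  -- components of e are scalars
  have hcomp : ∀ i j : Fin n, ∃ c : F, ∀ x : A,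
      (e (Pi.single j x)) i = c • x := by
    intro i j
    obtain ⟨c, hc'⟩ := endo_scalar F A
      ((LinearMap.proj i).comp (e.comp (LinearMap.single R (fun _ : Fin n => A) j)))
    exact ⟨c, fun x => hc' x⟩
  choose c hcspec using hcomp
  have hex : ∀ x : Fin n → A, ∀ i, (e x) i = ∑ j, c i j • x j := by
    intro x i
    have hx : x = ∑ j, Pi.single j (x j) := (Finset.univ_sum_single x).symm
    conv_lhs => rw [hx]
    rw [map_sum]
    simp only [Finset.sum_apply]
    exact Finset.sum_congr rfl fun j _ => hcspec i j (x j)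
  -- e fixes v, hence c is the identity matrix
  have hvW : v ∈ W := Submodule.mem_span_singleton_self v
  have hvc : ∀ i, v i = ∑ j, c i j • v j := fun i => by
    conv_lhs => rw [← heid v hvW]
    exact hex v i
  have hcdiag : ∀ i j, c i j = if i = j then 1 else 0 := by
    intro i j
    have := hvc i
    have h2 : b.repr (∑ j', c i j' • v j') j = c i j := by
      simp [hv, Finsupp.single_apply]
    rw [← this] at h2
    simpa [hv, Finsupp.single_apply, eq_comm] using h2.symm
  have heidall : ∀ x, e x = x := by
    intro x
    funext i
    rw [hex x i]
    simp [hcdiag, Finset.sum_ite_eq' Finset.univ, ite_smul]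
  -- hence W = ⊤ and density follows
  have hWtop : ∀ x : Fin n → A, x ∈ W := fun x => heidall x ▸ heW x
  intro g
  obtain ⟨r, hr⟩ := (Submodule.mem_span_singleton).1 (hWtop (fun i => g (b i)))
  refine ⟨r, ?_⟩
  apply b.ext
  intro i
  have := congrFun hr i
  exact this

theorem Phi_bijective [FiniteDimensional F A] [IsSimpleRing A] [Algebra.IsCentral F A] :
    Function.Bijective (Phi F A) := by
  have hsurj := Phi_surjective F A
  have hrank : Module.finrank F (A ⊗[F] Aᵐᵒᵖ) = Module.finrank F (Module.End F A) := by
    rw [Module.finrank_tensorProduct, Module.finrank_linearMap]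
    congr 1
    exact (MulOpposite.opLinearEquiv F (M := A)).symm.finrank_eq
  exact ⟨(LinearMap.injective_iff_surjective_of_finrank_eq_finrank hrank).2 hsurj, hsurj⟩

set_option maxHeartbeats 1000000 in
set_option synthInstance.maxHeartbeats 200000 in
theorem isSemisimpleRing_tensor [FiniteDimensional F A] [IsSimpleRing A]
    [Algebra.IsCentral F A] : IsSemisimpleRing (A ⊗[F] Aᵐᵒᵖ) := by
  set R := A ⊗[F] Aᵐᵒᵖ
  have hbij := Phi_bijective F A
  set n := Module.finrank F A
  let b : Module.Basis (Fin n) F A := Module.finBasis F A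
  -- the projections onto the basis lines
  let proj : Fin n → Module.End F A := fun i =>
    (LinearMap.toSpanSingleton F A (b i)).comp ((Finsupp.lapply i).comp b.repr.toLinearMap)
  have hproj : ∀ i x, proj i x = b.repr x i • b i := fun i x => rfl
  have hproj_sum : ∀ x : A, ∑ i, proj i x = x := fun x => by
    simp only [hproj]
    exact b.sum_repr x
  -- their preimages under Phi
  let E : Fin n → R := fun i => (AlgEquiv.ofBijective (Phi F A) hbij).symm (proj i)
  have hPhiE : ∀ i, Phi F A (E i) = proj i := fun i =>
    (AlgEquiv.ofBijective (Phi F A) hbij).apply_symm_apply (proj i)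
  have hEsum : ∑ i, E i = 1 := by
    apply hbij.1
    rw [map_sum, map_one]
    apply LinearMap.ext
    intro x
    simp only [LinearMap.coe_sum, Finset.sum_apply, hPhiE]
    simpa using hproj_sum x
  -- right multiplication by E i, as an R-linear endomorphism of R
  let ρ : Fin n → (R →ₗ[R] R) := fun i => LinearMap.toSpanSingleton R R (E i)
  refine isSemisimpleModule_of_isSemisimpleModule_submodule'
    (p := fun i => LinearMap.range (ρ i)) (fun i => ?_) ?_
  · -- each range is isomorphic to the simple module A
    letI : Module R A := rmod F A
    haveI : IsSimpleModule R A := isSimpleModule_rmod F A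
    have key : ∀ (j : Fin n) (t : R),
        Phi F A (t * E i) (b j) = b.repr (b j) i • Phi F A t (b i) := by
      intro j t
      rw [map_mul, Module.End.mul_apply, hPhiE, hproj, map_smul]
    let θ : R →ₗ[R] A :=
      { toFun := fun r => Phi F A r (b i)
        map_add' := fun r s => by simp
        map_smul' := fun r s => by
          simp only [smul_eq_mul, map_mul, RingHom.id_apply]
          rw [rmod_smul_def]
          rfl }
    let φ : LinearMap.range (ρ i) →ₗ[R] A := θ.comp (LinearMap.range (ρ i)).subtype
    have hφinj : Function.Injective φ := by
      rintro ⟨x, r, rfl⟩ ⟨y, s, rfl⟩ h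
      simp only [φ, θ, LinearMap.comp_apply, Submodule.subtype_apply, LinearMap.coe_mk,
        AddHom.coe_mk] at h
      have h' : Phi F A r (b i) = Phi F A s (b i) := by
        have hr := key i r
        have hs := key i s
        simp only [ρ, LinearMap.toSpanSingleton_apply, smul_eq_mul] at h
        rw [hr, hs] at h
        simpa using h
      ext
      simp only [ρ, LinearMap.toSpanSingleton_apply, smul_eq_mul]
      apply hbij.1
      apply b.ext
      intro j
      rw [key, key, h']
    have hφsurj : Function.Surjective φ := by
      intro a
      -- find g with g (b i) = a
      let g : Module.End F A :=
        (LinearMap.toSpanSingleton F A a).comp ((Finsupp.lapply i).comp b.repr.toLinearMap)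
      obtain ⟨r, hr⟩ := hbij.2 g
      refine ⟨⟨ρ i r, ⟨r, rfl⟩⟩, ?_⟩
      simp only [φ, θ, LinearMap.comp_apply, Submodule.subtype_apply, LinearMap.coe_mk,
        AddHom.coe_mk, ρ, LinearMap.toSpanSingleton_apply, smul_eq_mul]
      rw [key i r, hr]
      simp [g, LinearMap.toSpanSingleton_apply, Finsupp.single_apply]
    exact IsSemisimpleModule.congr (LinearEquiv.ofBijective φ ⟨hφinj, hφsurj⟩)
  · -- the ranges cover R
    rw [eq_top_iff]
    intro r _
    have : r = ∑ i, r * E i := by rw [← Finset.mul_sum, hEsum, mul_one]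
    rw [this]
    apply Submodule.sum_mem
    intro i _
    exact Submodule.mem_iSup_of_mem i ⟨r, rfl⟩

end TwistedCSA

/-- Let `A` be a finite-dimensional central simple algebra with `1` over a field
`F` and let `σ, τ` be (nonzero, i.e. unital) `F`-algebra endomorphisms of `A`. Then every
`F`-linear `(σ,τ)`-derivation of `A` is `(σ,τ)`-inner. -/
theorem twisted_derivation_inner_csa {F A : Type*} [Field F] [Ring A] [Algebra F A]
    [FiniteDimensional F A] [Algebra.IsCentral F A] [IsSimpleRing A]
    (σ τ : A →ₐ[F] A)
    (δ : A →ₗ[F] A)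
    (hδ : ∀ a b : A, δ (a * b) = δ a * τ b + σ a * δ b) :
    ∃ x : A, ∀ a : A, δ a = x * τ a - σ a * x := by
  classical
  have hδ1 : δ 1 = 0 := by
    have h := hδ 1 1
    simp only [mul_one, map_one, one_mul] at h
    have h2 : δ 1 + δ 1 = δ 1 + 0 := by rw [add_zero]; exact h.symm
    exact (add_left_cancel h2)
  -- the twisted left action of A on A × A
  let Ψ₁ : A →ₐ[F] Module.End F (A × A) :=
    { toFun := fun a =>
        { toFun := fun p => (σ a * p.1 + δ a * p.2, τ a * p.2)
          map_add' := fun p q => by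
            simp only [Prod.fst_add, Prod.snd_add, mul_add, Prod.mk_add_mk]
            refine Prod.ext ?_ ?_ <;> simp <;> abel
          map_smul' := fun c p => by
            simp [Prod.smul_fst, Prod.smul_snd, mul_smul_comm, Prod.smul_mk] }
      map_one' := by
        apply LinearMap.ext
        intro p
        simp [hδ1]
      map_mul' := fun a b => by
        apply LinearMap.ext
        intro p
        simp only [Module.End.mul_apply, LinearMap.coe_mk, AddHom.coe_mk, map_mul, hδ]
        refine Prod.ext ?_ ?_
        · simp only [mul_add, add_mul, mul_assoc]
          abel
        · simp [mul_assoc]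
      map_zero' := by
        apply LinearMap.ext
        intro p
        simp
      map_add' := fun a b => by
        apply LinearMap.ext
        intro p
        simp only [map_add, add_mul, LinearMap.coe_mk, AddHom.coe_mk, LinearMap.add_apply,
          Prod.mk_add_mk]
        refine Prod.ext ?_ ?_
        · simp only [Prod.fst_add]; abel
        · simp
      commutes' := fun c => by
        apply LinearMap.ext
        intro p
        have : δ (algebraMap F A c) = 0 := by
          rw [Algebra.algebraMap_eq_smul_one, map_smul, hδ1, smul_zero]
        refine Prod.ext ?_ ?_
        · simp [this, Module.algebraMap_end_apply, ← Algebra.smul_def]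
        · simp [Module.algebraMap_end_apply, ← Algebra.smul_def] }
  -- the right action of A on A × A
  let Ψ₂ : Aᵐᵒᵖ →ₐ[F] Module.End F (A × A) := Algebra.lsmul F F (A × A)
  have hΨ₂ : ∀ (b : Aᵐᵒᵖ) (p : A × A), Ψ₂ b p = (p.1 * b.unop, p.2 * b.unop) := by
    intro b p
    refine Prod.ext ?_ ?_ <;>
      simp [Ψ₂, MulOpposite.smul_eq_mul_unop]
  have hcomm : ∀ (a : A) (b : Aᵐᵒᵖ), Commute (Ψ₁ a) (Ψ₂ b) := by
    intro a b
    apply LinearMap.ext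
    intro p
    show Ψ₁ a (Ψ₂ b p) = Ψ₂ b (Ψ₁ a p)
    rw [hΨ₂, hΨ₂]
    show (σ a * (p.1 * b.unop) + δ a * (p.2 * b.unop), τ a * (p.2 * b.unop))
      = ((σ a * p.1 + δ a * p.2) * b.unop, (τ a * p.2) * b.unop)
    refine Prod.ext ?_ ?_
    · simp [add_mul, mul_assoc]
    · simp [mul_assoc]
  let Ψ : (A ⊗[F] Aᵐᵒᵖ) →ₐ[F] Module.End F (A × A) :=
    Algebra.TensorProduct.lift Ψ₁ Ψ₂ hcomm
  have hΨtmul : ∀ (a : A) (b : Aᵐᵒᵖ) (p : A × A),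
      Ψ (a ⊗ₜ b) p = Ψ₁ a (Ψ₂ b p) := by
    intro a b p
    rw [show Ψ (a ⊗ₜ b) = Ψ₁ a * Ψ₂ b from Algebra.TensorProduct.lift_tmul ..]
    rfl
  letI : Module (A ⊗[F] Aᵐᵒᵖ) (A × A) := Module.compHom _ Ψ.toRingHom
  have hsmul : ∀ (r : A ⊗[F] Aᵐᵒᵖ) (p : A × A), r • p = Ψ r p := fun _ _ => rfl
  haveI : IsSemisimpleRing (A ⊗[F] Aᵐᵒᵖ) := TwistedCSA.isSemisimpleRing_tensor F A
  -- the submodule A × 0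
  let N : Submodule (A ⊗[F] Aᵐᵒᵖ) (A × A) :=
    { carrier := {p | p.2 = 0}
      add_mem' := fun {p} {q} hp hq => by
        simp only [Set.mem_setOf_eq, Prod.snd_add] at *
        rw [hp, hq, add_zero]
      zero_mem' := rfl
      smul_mem' := fun r p hp => by
        simp only [Set.mem_setOf_eq] at *
        rw [hsmul]
        induction r using TensorProduct.induction_on with
        | zero => simp
        | tmul a b =>
          rw [hΨtmul, hΨ₂]
          show τ a * (p.2 * b.unop) = 0
          rw [hp, zero_mul, mul_zero]
        | add r s hr hs =>
          rw [map_add, LinearMap.add_apply]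
          show (Ψ r p + Ψ s p).2 = 0
          rw [Prod.snd_add, hr, hs, add_zero] }
  have hNmem : ∀ p : A × A, p ∈ N ↔ p.2 = 0 := fun p => Iff.rfl
  obtain ⟨N', hcompl⟩ := exists_isCompl N
  have htop : ((0 : A), (1 : A)) ∈ N ⊔ N' := by
    rw [hcompl.sup_eq_top]; trivial
  obtain ⟨y, hy, z, hz, hyz⟩ := Submodule.mem_sup.1 htop
  have hz2 : z.2 = 1 := by
    have : y.2 + z.2 = 1 := by
      have := congrArg Prod.snd hyz
      simpa using this
    rwa [(hNmem y).1 hy, zero_add] at this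
  refine ⟨z.1, fun a => ?_⟩
  -- compare the two elements of N' with second coordinate τ a
  have h1 : (a ⊗ₜ[F] (1 : Aᵐᵒᵖ)) • z ∈ N' := N'.smul_mem _ hz
  have h2 : ((1 : A) ⊗ₜ[F] (MulOpposite.op (τ a))) • z ∈ N' := N'.smul_mem _ hz
  have hd : (a ⊗ₜ[F] (1 : Aᵐᵒᵖ)) • z - ((1 : A) ⊗ₜ[F] (MulOpposite.op (τ a))) • z ∈ N' :=
    N'.sub_mem h1 h2
  have he1 : (a ⊗ₜ[F] (1 : Aᵐᵒᵖ)) • z = (σ a * z.1 + δ a, τ a) := by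
    rw [hsmul, hΨtmul, hΨ₂]
    show (σ a * (z.1 * 1) + δ a * (z.2 * 1), τ a * (z.2 * 1)) = _
    rw [hz2]
    simp
  have he2 : ((1 : A) ⊗ₜ[F] (MulOpposite.op (τ a))) • z = (z.1 * τ a, τ a) := by
    rw [hsmul, hΨtmul, hΨ₂]
    show (σ 1 * (z.1 * τ a) + δ 1 * (z.2 * τ a), τ 1 * (z.2 * τ a)) = _
    rw [hz2, hδ1]
    simp
  have hdN : (a ⊗ₜ[F] (1 : Aᵐᵒᵖ)) • z - ((1 : A) ⊗ₜ[F] (MulOpposite.op (τ a))) • z ∈ N := by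
    rw [hNmem, he1, he2]
    show τ a - τ a = 0
    rw [sub_self]
  have : (a ⊗ₜ[F] (1 : Aᵐᵒᵖ)) • z - ((1 : A) ⊗ₜ[F] (MulOpposite.op (τ a))) • z = 0 := by
    have := hcompl.inf_eq_bot ▸ Submodule.mem_inf.2 ⟨hdN, hd⟩
    simpa using this
  have hfst := congrArg Prod.fst this
  rw [he1, he2] at hfst
  simp only [Prod.fst_sub, Prod.fst_zero] at hfst
  have : σ a * z.1 + δ a - z.1 * τ a = 0 := hfst
  have := sub_eq_zero.1 this
  linear_combination (norm := noncomm_ring) this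
end

section
/- Let A be a unique factorization domain and let σ and τ be two distinct ring endomorphisms of A. Then there exists g ∈ A which is a greatest common divisor of the set {τ(x) − σ(x) : x ∈ A} (i.e., g divides τ(x) − σ(x) for every x ∈ A, and every common divisor of all τ(x) − σ(x) divides g), the map Δ : A → A uniquely determined by g·Δ(x) = τ(x) − σ(x) for all x ∈ A is a (σ,τ)-derivation, and the A-module of all (σ,τ)-derivations of A is free of rank one generated by Δ: for every (σ,τ)-derivation δ of A there exists a unique a ∈ A such that δ(x) = a·Δ(x) for all x ∈ A (equivalently, g·δ(x) = a·(τ(x) − σ(x)) for all x ∈ A). -/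
open UniqueFactorizationMonoid in
/-- Hartwig–Larsson–Silvestrov. Let `A` be a UFD and `σ ≠ τ` two ring
endomorphisms of `A`. Then there is `g ∈ A` which is a gcd of `{τ(x) − σ(x) : x ∈ A}`, the map
`Δ` determined by `g·Δ(x) = τ(x) − σ(x)` is a `(σ,τ)`-derivation, and the `A`-module of
`(σ,τ)`-derivations of `A` is free of rank one generated by `Δ`. -/
theorem twisted_derivations_free_rank_one_ufd {A : Type*} [CommRing A] [IsDomain A]
    [UniqueFactorizationMonoid A]
    (σ τ : A →+* A) (hστ : σ ≠ τ) :
    ∃ (g : A) (Δ : A → A),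
      (∀ x : A, g ∣ τ x - σ x) ∧
      (∀ d : A, (∀ x : A, d ∣ τ x - σ x) → d ∣ g) ∧
      (∀ x : A, g * Δ x = τ x - σ x) ∧
      (∀ x y : A, Δ (x + y) = Δ x + Δ y) ∧
      (∀ x y : A, Δ (x * y) = Δ x * τ y + σ x * Δ y) ∧
      ∀ δ : A → A,
        (∀ x y : A, δ (x + y) = δ x + δ y) →
        (∀ x y : A, δ (x * y) = δ x * τ y + σ x * δ y) →
        ∃! a : A, ∀ x : A, δ x = a * Δ x := by
  classical
  letI : NormalizationMonoid A :=
    (UniqueFactorizationMonoid.normalizationMonoid (α := A)).toNormalizationMonoid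
  letI : NormalizedGCDMonoid A := UniqueFactorizationMonoid.toNormalizedGCDMonoid A
  set D : A → A := fun x => τ x - σ x with hDdef
  obtain ⟨x₀, hx₀⟩ : ∃ x, D x ≠ 0 := by
    by_contra h
    push_neg at h
    apply hστ
    ext x
    have := h x
    simp only [D, sub_eq_zero] at this
    exact this.symm
  set T : Set A := {g | ∀ x, g ∣ D x} with hTdef
  have hT1 : (1 : A) ∈ T := fun x => one_dvd _
  have hTne : ∀ g ∈ T, g ≠ 0 := by
    rintro g hg rfl
    exact hx₀ (zero_dvd_iff.mp (hg x₀))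
  set F : A → ℕ := fun g => Multiset.card (normalizedFactors g) with hFdef
  set N : ℕ := F (D x₀) with hN
  have hbound : ∀ g ∈ T, F g ≤ N := by
    intro g hg
    exact Multiset.card_le_card
      ((dvd_iff_normalizedFactors_le_normalizedFactors (hTne g hg) hx₀).mp (hg x₀))
  set P : ℕ → Prop := fun n => ∃ g ∈ T, F g = n with hP
  have hP0 : P 0 := ⟨1, hT1, by simp [F]⟩
  have hPmax : P (Nat.findGreatest P N) := Nat.findGreatest_spec (Nat.zero_le N) hP0
  obtain ⟨g, hgT, hgF⟩ := hPmax
  have hmax : ∀ g' ∈ T, F g' ≤ F g := by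
    intro g' hg'
    by_contra h
    push_neg at h
    exact Nat.findGreatest_is_greatest (hgF ▸ h) (hbound g' hg') ⟨g', hg', rfl⟩
  have hg0 : g ≠ 0 := hTne g hgT
  -- the gcd property
  have hgcd : ∀ d : A, (∀ x : A, d ∣ D x) → d ∣ g := by
    intro d hd
    have hd0 : d ≠ 0 := hTne d hd
    have hmT : lcm d g ∈ T := fun x => lcm_dvd (hd x) (hgT x)
    have hm0 : lcm d g ≠ 0 := hTne _ hmT
    have hle : normalizedFactors g ≤ normalizedFactors (lcm d g) :=
      (dvd_iff_normalizedFactors_le_normalizedFactors hg0 hm0).mp (dvd_lcm_right d g)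
    have heq : normalizedFactors g = normalizedFactors (lcm d g) :=
      Multiset.eq_of_le_of_card_le hle (hmax _ hmT)
    have hassoc : Associated (lcm d g) g :=
      ((prod_normalizedFactors hm0).symm.trans (heq ▸ prod_normalizedFactors hg0))
    exact (dvd_lcm_left d g).trans hassoc.dvd
  have hgdvd : ∀ x : A, g ∣ D x := hgT
  set Δ : A → A := fun x => (hgdvd x).choose with hΔdef
  have hΔ : ∀ x : A, g * Δ x = D x := fun x => ((hgdvd x).choose_spec).symm
  have hcancel : ∀ a b : A, g * a = g * b → a = b := fun a b h => mul_left_cancel₀ hg0 h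
  have hDadd : ∀ x y : A, D (x + y) = D x + D y := by
    intro x y; simp only [D, map_add]; ring
  have hDmul : ∀ x y : A, D (x * y) = D x * τ y + σ x * D y := by
    intro x y; simp only [D, map_mul]; ring
  have hΔadd : ∀ x y : A, Δ (x + y) = Δ x + Δ y := by
    intro x y
    apply hcancel
    rw [hΔ, hDadd, ← hΔ x, ← hΔ y]; ring
  have hΔmul : ∀ x y : A, Δ (x * y) = Δ x * τ y + σ x * Δ y := by
    intro x y
    apply hcancel
    rw [hΔ, hDmul, ← hΔ x, ← hΔ y]; ring
  have hΔx₀ : Δ x₀ ≠ 0 := by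
    intro h
    apply hx₀
    rw [← hΔ x₀, h, mul_zero]
  refine ⟨g, Δ, hgdvd, hgcd, hΔ, hΔadd, hΔmul, ?_⟩
  intro δ hδadd hδmul
  have key : ∀ x y : A, δ x * D y = δ y * D x := by
    intro x y
    have h1 : δ (x * y) = δ (y * x) := by rw [mul_comm]
    rw [hδmul, hδmul] at h1
    simp only [D]
    linear_combination h1
  have key' : ∀ x y : A, δ x * Δ y = δ y * Δ x := by
    intro x y
    apply hcancel
    have := key x y
    rw [← hΔ x, ← hΔ y] at this
    linear_combination this
  set c : A := gcd (δ x₀) (Δ x₀) with hc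
  obtain ⟨p, hp⟩ : c ∣ δ x₀ := gcd_dvd_left _ _
  obtain ⟨q, hq⟩ : c ∣ Δ x₀ := gcd_dvd_right _ _
  have hc0 : c ≠ 0 := by
    intro h; apply hΔx₀; rw [hq, h, zero_mul]
  have hq0 : q ≠ 0 := by
    intro h; apply hΔx₀; rw [hq, h, mul_zero]
  have hrel : ∀ x : A, q * δ x = p * Δ x := by
    intro x
    apply mul_left_cancel₀ hc0
    have := key' x x₀
    rw [hp, hq] at this
    linear_combination this
  have hcop : IsRelPrime q p := by
    intro d hdq hdp
    have h1 : c * d ∣ δ x₀ := by rw [hp]; exact mul_dvd_mul_left c hdp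
    have h2 : c * d ∣ Δ x₀ := by rw [hq]; exact mul_dvd_mul_left c hdq
    have h3 : c * d ∣ c * 1 := by rw [mul_one]; exact dvd_gcd h1 h2
    exact isUnit_of_dvd_one ((mul_dvd_mul_iff_left hc0).mp h3)
  have hqΔ : ∀ x : A, q ∣ Δ x := by
    intro x
    exact hcop.dvd_of_dvd_mul_left ⟨δ x, (hrel x).symm⟩
  have hgqT : ∀ x : A, g * q ∣ D x := by
    intro x
    rw [← hΔ x]
    exact mul_dvd_mul_left g (hqΔ x)
  have hqg : g * q ∣ g * 1 := by rw [mul_one]; exact hgcd _ hgqT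
  have hqunit : IsUnit q := isUnit_of_dvd_one ((mul_dvd_mul_iff_left hg0).mp hqg)
  obtain ⟨u, hu⟩ := hqunit
  refine ⟨(↑u⁻¹ : A) * p, ?_, ?_⟩
  · intro x
    have h1 : (↑u : A) * δ x = p * Δ x := by rw [hu]; exact hrel x
    calc δ x = (↑u⁻¹ : A) * ((↑u : A) * δ x) := by
          rw [← mul_assoc, Units.inv_mul, one_mul]
      _ = (↑u⁻¹ : A) * (p * Δ x) := by rw [h1]
      _ = (↑u⁻¹ : A) * p * Δ x := by ring
  · intro a ha
    have h1 : a * Δ x₀ = ((↑u⁻¹ : A) * p) * Δ x₀ := by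
      rw [← ha x₀]
      have h2 : (↑u : A) * δ x₀ = p * Δ x₀ := by rw [hu]; exact hrel x₀
      calc δ x₀ = (↑u⁻¹ : A) * ((↑u : A) * δ x₀) := by
            rw [← mul_assoc, Units.inv_mul, one_mul]
        _ = (↑u⁻¹ : A) * (p * Δ x₀) := by rw [h2]
        _ = (↑u⁻¹ : A) * p * Δ x₀ := by ring
    exact mul_right_cancel₀ hΔx₀ h1
end

section
/- Let R and T be rings with 1, let ι : R → T be an injective unital ring homomorphism mapping the center Z(R) into the center Z(T), and let G be a group. Let σ and τ be R-linear ring endomorphisms of the group ring RG fixing the center Z(RG) pointwise, and let δ be an R-linear (σ,τ)-derivation of RG. Then there exist T-linear ring endomorphisms σ_T and τ_T of TG fixing Z(TG) pointwise with σ_T ∘ ι̂ = ι̂ ∘ σ and τ_T ∘ ι̂ = ι̂ ∘ τ, and a T-linear (σ_T,τ_T)-derivation δ_T of TG with δ_T ∘ ι̂ = ι̂ ∘ δ, where ι̂ : RG → TG is the coefficientwise map induced by ι. -/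
open MonoidAlgebra

namespace TDE

variable {R T G : Type*} [Ring R] [Ring T] [Group G]

/-- The coefficientwise ring homomorphism `R[G] →+* T[G]` induced by `ι`. -/
noncomputable def ihat (ι : R →+* T) : MonoidAlgebra R G →+* MonoidAlgebra T G :=
  liftNCRingHom (singleOneRingHom.comp ι) (of T G) (fun r g =>
    single_commute_single (Commute.one_left g) (Commute.one_right (ι r)))

theorem ihat_single (ι : R →+* T) (g : G) (r : R) :
    ihat ι (single g r) = single g (ι r) := by
  show liftNC _ _ (single g r) = _
  rw [liftNC_single]
  show single 1 (ι r) * single g 1 = _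
  rw [single_mul_single, one_mul, mul_one]

theorem ihat_apply (ι : R →+* T) (x : MonoidAlgebra R G) :
    ihat ι x = ofCoeff (Finsupp.mapRange (⇑ι) ι.map_zero x.coeff) := by
  induction x using MonoidAlgebra.induction_linear with
  | zero => simp
  | add a b ha hb => rw [map_add, ha, hb, coeff_add, Finsupp.mapRange_add ι.map_add, ofCoeff_add]
  | single g r => rw [ihat_single]; exact congrArg ofCoeff (Finsupp.mapRange_single (f := ⇑ι)).symm

/-- Elements commuting with all scalars `single 1 r` have central coefficients. -/
theorem coeff_central {y : MonoidAlgebra R G}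
    (h : ∀ r : R, single (1:G) r * y = y * single 1 r) (k : G) :
    y.coeff k ∈ Subring.center R := by
  rw [Subring.mem_center_iff]
  intro r
  have := congrArg (fun z : MonoidAlgebra R G => z.coeff k) (h r)
  rwa [coeff_single_one_mul, coeff_mul_single_one] at this

/-- An element with central coefficients commutes with all scalars. -/
theorem commute_single_one {y : MonoidAlgebra T G}
    (h : ∀ k : G, y.coeff k ∈ Subring.center T) (t : T) :
    single (1:G) t * y = y * single 1 t := by
  ext k
  rw [coeff_single_one_mul, coeff_mul_single_one]
  exact Subring.mem_center_iff.mp (h k) t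


theorem exists_ext (ι : R →+* T)
    (hcen : ∀ r ∈ Subring.center R, ι r ∈ Subring.center T)
    (σ : MonoidAlgebra R G →+* MonoidAlgebra R G)
    (hσlin : ∀ (r : R) (x : MonoidAlgebra R G),
      σ (single 1 r * x) = single 1 r * σ x ∧
      σ (x * single 1 r) = σ x * single 1 r)
    (hσc : ∀ x ∈ Subring.center (MonoidAlgebra R G), σ x = x) :
    ∃ σT : MonoidAlgebra T G →+* MonoidAlgebra T G,
      (∀ (t : T) (x : MonoidAlgebra T G),
        σT (single 1 t * x) = single 1 t * σT x ∧
        σT (x * single 1 t) = σT x * single 1 t) ∧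
      (∀ x ∈ Subring.center (MonoidAlgebra T G), σT x = x) ∧
      (∀ x : MonoidAlgebra R G, σT (ihat ι x) = ihat ι (σ x)) := by
  classical
  have hg : ∀ (g : G) (r : R),
      single (1:G) r * σ (single g 1) = σ (single g 1) * single 1 r := by
    intro g r
    have e : single (1:G) r * single g (1:R) = single g (1:R) * single 1 r := by
      rw [single_mul_single, single_mul_single, one_mul, mul_one, one_mul, mul_one]
    rw [← (hσlin r (single g 1)).1, ← (hσlin r (single g 1)).2, e]
  have hcoef : ∀ (g k : G), (ihat ι (σ (single g 1)) : MonoidAlgebra T G).coeff k ∈ Subring.center T := by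
    intro g k
    rw [ihat_apply, coeff_ofCoeff, Finsupp.mapRange_apply]
    exact hcen _ (coeff_central (hg g) k)
  have hcommT : ∀ (g : G) (t : T),
      single (1:G) t * ihat ι (σ (single g 1)) = ihat ι (σ (single g 1)) * single 1 t :=
    fun g t => commute_single_one (hcoef g) t
  set F : G →* MonoidAlgebra T G :=
    { toFun := fun g => ihat ι (σ (single g 1))
      map_one' := by
        show ihat ι (σ (single (1:G) (1:R))) = 1
        rw [show (single (1:G) (1:R)) = (1 : MonoidAlgebra R G) from (one_def).symm,
          map_one, map_one]
      map_mul' := by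
        intro a b
        show ihat ι (σ (single (a * b) 1)) = ihat ι (σ (single a 1)) * ihat ι (σ (single b 1))
        rw [← map_mul, ← map_mul, single_mul_single, one_mul] } with hFdef
  set σT : MonoidAlgebra T G →+* MonoidAlgebra T G :=
    liftNCRingHom singleOneRingHom F (fun t g => by
      unfold Commute SemiconjBy
      simp only [singleOneRingHom_apply]
      exact hcommT g t) with hσT
  have hsingle : ∀ (g : G) (t : T), σT (single g t) = single 1 t * ihat ι (σ (single g 1)) := by
    intro g t
    show liftNC _ _ (single g t) = _
    rw [liftNC_single]
    rfl
  have hone : ∀ t : T, σT (single 1 t) = single 1 t := by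
    intro t
    rw [hsingle, show (single (1:G) (1:R)) = (1 : MonoidAlgebra R G) from (one_def).symm,
      map_one, map_one, mul_one]
  have hlin : ∀ (t : T) (x : MonoidAlgebra T G),
      σT (single 1 t * x) = single 1 t * σT x ∧
      σT (x * single 1 t) = σT x * single 1 t := by
    intro t x
    exact ⟨by rw [map_mul, hone], by rw [map_mul, hone]⟩
  have hext : ∀ x : MonoidAlgebra R G, σT (ihat ι x) = ihat ι (σ x) := by
    intro x
    induction x using MonoidAlgebra.induction_linear with
    | zero => simp
    | add a b ha hb => simp only [map_add, ha, hb]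
    | single g r =>
      rw [ihat_single, hsingle, show single (1:G) (ι r) = ihat ι (single 1 r) from
        (ihat_single ι 1 r).symm, ← map_mul, ← (hσlin r (single g 1)).1,
        single_mul_single, one_mul, mul_one]
  refine ⟨σT, hlin, ?_, hext⟩
  intro x hx
  have hconj : ∀ h g : G, x.coeff (h * g * h⁻¹) = x.coeff g := by
    intro h g
    have hc : single h (1:T) * x = x * single h 1 := Subring.mem_center_iff.mp hx _
    have := congrArg (fun z : MonoidAlgebra T G => z.coeff (h * g)) hc
    rw [coeff_single_mul_apply, coeff_mul_single_apply, one_mul, mul_one, inv_mul_cancel_left] at this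
    exact this.symm
  set I := x.coeff.support.image (⇑x.coeff) with hI
  set Fib : T → Finset G := fun t => x.coeff.support.filter (fun g => x.coeff g = t) with hFib
  set s : T → MonoidAlgebra R G := fun t => ∑ g ∈ Fib t, single g (1:R) with hs
  have hFibmem : ∀ (t : T) (h g : G), g ∈ Fib t → h * g * h⁻¹ ∈ Fib t := by
    intro t h g hgm
    rw [hFib, Finset.mem_filter] at hgm ⊢
    exact ⟨Finsupp.mem_support_iff.mpr (by rw [hconj]; exact Finsupp.mem_support_iff.mp hgm.1),
      by rw [hconj]; exact hgm.2⟩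
  have h1 : ∀ t, ihat ι (s t) = ∑ g ∈ Fib t, single g (1:T) := by
    intro t
    rw [hs]
    simp only [map_sum, ihat_single, map_one]
  have hdecomp : x = ∑ t ∈ I, single (1:G) t * ihat ι (s t) := by
    calc x = ∑ g ∈ x.coeff.support, single g (x.coeff g) := by
            conv_lhs => rw [← sum_coeff_single x]
            rfl
      _ = ∑ t ∈ I, ∑ g ∈ Fib t, single g (x.coeff g) :=
            (Finset.sum_fiberwise_of_maps_to (fun g hg => Finset.mem_image_of_mem _ hg) _).symm
      _ = ∑ t ∈ I, single (1:G) t * ihat ι (s t) := by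
            refine Finset.sum_congr rfl fun t _ => ?_
            rw [h1, Finset.mul_sum]
            refine Finset.sum_congr rfl fun g hg => ?_
            rw [single_mul_single, one_mul, mul_one,
              (Finset.mem_filter.mp hg).2]
  have hscen : ∀ t, s t ∈ Subring.center (MonoidAlgebra R G) := by
    intro t
    rw [Subring.mem_center_iff]
    intro y
    induction y using MonoidAlgebra.induction_linear with
    | zero => rw [zero_mul, mul_zero]
    | add a b ha hb => rw [add_mul, mul_add, ha, hb]
    | single h r =>
      rw [hs]
      simp only [Finset.mul_sum, Finset.sum_mul, single_mul_single, mul_one, one_mul]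
      refine Finset.sum_nbij' (fun g => h * g * h⁻¹) (fun g => h⁻¹ * g * h)
        (fun g hgm => hFibmem t h g hgm)
        (fun g hgm => by simpa using hFibmem t h⁻¹ g hgm)
        (fun g _ => by group) (fun g _ => by group)
        (fun g _ => by rw [show h * g * h⁻¹ * h = h * g by group])
  rw [hdecomp, map_sum]
  refine Finset.sum_congr rfl fun t _ => ?_
  rw [(hlin t _).1, hext, hσc _ (hscen t)]


theorem mul_shuffle {T G : Type*} [Ring T] [Group G] (u v : T) (A B : MonoidAlgebra T G)
    (hA : single (1:G) v * A = A * single 1 v) :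
    (single (1:G) u * A) * (single (1:G) v * B) = single (1:G) u * single 1 v * (A * B) := by
  rw [mul_assoc (single (1:G) u) A _, ← mul_assoc A (single (1:G) v) B, ← hA,
    mul_assoc (single (1:G) v) A B, ← mul_assoc, ← mul_assoc]

theorem exists_der (ι : R →+* T)
    (hcen : ∀ r ∈ Subring.center R, ι r ∈ Subring.center T)
    (σ τ : MonoidAlgebra R G →+* MonoidAlgebra R G)
    (hσlin : ∀ (r : R) (x : MonoidAlgebra R G),
      σ (single 1 r * x) = single 1 r * σ x ∧ σ (x * single 1 r) = σ x * single 1 r)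
    (hτlin : ∀ (r : R) (x : MonoidAlgebra R G),
      τ (single 1 r * x) = single 1 r * τ x ∧ τ (x * single 1 r) = τ x * single 1 r)
    (σT τT : MonoidAlgebra T G →+* MonoidAlgebra T G)
    (hσlinT : ∀ (t : T) (x : MonoidAlgebra T G),
      σT (single 1 t * x) = single 1 t * σT x ∧ σT (x * single 1 t) = σT x * single 1 t)
    (hτlinT : ∀ (t : T) (x : MonoidAlgebra T G),
      τT (single 1 t * x) = single 1 t * τT x ∧ τT (x * single 1 t) = τT x * single 1 t)
    (hσext : ∀ x : MonoidAlgebra R G, σT (ihat ι x) = ihat ι (σ x))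
    (hτext : ∀ x : MonoidAlgebra R G, τT (ihat ι x) = ihat ι (τ x))
    (δ : MonoidAlgebra R G →+ MonoidAlgebra R G)
    (hδlin : ∀ (r : R) (x : MonoidAlgebra R G),
      δ (single 1 r * x) = single 1 r * δ x ∧ δ (x * single 1 r) = δ x * single 1 r)
    (hδ : ∀ a b : MonoidAlgebra R G, δ (a * b) = δ a * τ b + σ a * δ b) :
    ∃ δT : MonoidAlgebra T G →+ MonoidAlgebra T G,
      (∀ (t : T) (x : MonoidAlgebra T G),
        δT (single 1 t * x) = single 1 t * δT x ∧ δT (x * single 1 t) = δT x * single 1 t) ∧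
      (∀ a b : MonoidAlgebra T G, δT (a * b) = δT a * τT b + σT a * δT b) ∧
      (∀ x : MonoidAlgebra R G, δT (ihat ι x) = ihat ι (δ x)) := by
  classical
  -- singles over T expressed via ihat
  have hsT : ∀ g : G, single g (1:T) = ihat ι (single g (1:R)) := by
    intro g; rw [ihat_single, map_one]
  -- commutation of images of group elements with scalars
  have hcommδ : ∀ (g : G) (t : T),
      single (1:G) t * ihat ι (δ (single g 1)) = ihat ι (δ (single g 1)) * single 1 t := by
    intro g t
    refine commute_single_one (fun k => ?_) t
    rw [ihat_apply, coeff_ofCoeff, Finsupp.mapRange_apply]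
    refine hcen _ (coeff_central (fun r => ?_) k)
    have e : single (1:G) r * single g (1:R) = single g (1:R) * single 1 r := by
      rw [single_mul_single, single_mul_single, one_mul, mul_one, one_mul, mul_one]
    rw [← (hδlin r (single g 1)).1, ← (hδlin r (single g 1)).2, e]
  have hcommσ : ∀ (g : G) (t : T),
      single (1:G) t * ihat ι (σ (single g 1)) = ihat ι (σ (single g 1)) * single 1 t := by
    intro g t
    refine commute_single_one (fun k => ?_) t
    rw [ihat_apply, coeff_ofCoeff, Finsupp.mapRange_apply]
    refine hcen _ (coeff_central (fun r => ?_) k)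
    have e : single (1:G) r * single g (1:R) = single g (1:R) * single 1 r := by
      rw [single_mul_single, single_mul_single, one_mul, mul_one, one_mul, mul_one]
    rw [← (hσlin r (single g 1)).1, ← (hσlin r (single g 1)).2, e]
  -- σT, τT on singles
  have hσs : ∀ (g : G) (t : T), σT (single g t) = single 1 t * ihat ι (σ (single g 1)) := by
    intro g t
    rw [show single g t = single (1:G) t * single g (1:T) by
          rw [single_mul_single, one_mul, mul_one],
      (hσlinT t _).1, hsT g, hσext]
  have hτs : ∀ (g : G) (t : T), τT (single g t) = single 1 t * ihat ι (τ (single g 1)) := by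
    intro g t
    rw [show single g t = single (1:G) t * single g (1:T) by
          rw [single_mul_single, one_mul, mul_one],
      (hτlinT t _).1, hsT g, hτext]
  set δT : MonoidAlgebra T G →+ MonoidAlgebra T G :=
    liftNC (MonoidAlgebra.singleAddHom (1:G)) (fun g => ihat ι (δ (single g 1))) with hδT
  have hδs : ∀ (g : G) (t : T), δT (single g t) = single 1 t * ihat ι (δ (single g 1)) := by
    intro g t
    rw [hδT, liftNC_single]
    rfl
  have hlin : ∀ (t : T) (x : MonoidAlgebra T G),
      δT (single 1 t * x) = single 1 t * δT x ∧ δT (x * single 1 t) = δT x * single 1 t := by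
    intro t x
    constructor
    · induction x using MonoidAlgebra.induction_linear with
      | zero => rw [mul_zero, map_zero, mul_zero]
      | add a b ha hb => rw [mul_add, map_add, ha, hb, map_add, mul_add]
      | single h s =>
        rw [single_mul_single, one_mul, hδs, hδs,
          show single (1:G) (t * s) = single (1:G) t * single 1 s by
            rw [single_mul_single, one_mul],
          mul_assoc]
    · induction x using MonoidAlgebra.induction_linear with
      | zero => rw [zero_mul, map_zero, zero_mul]
      | add a b ha hb => rw [add_mul, map_add, ha, hb, map_add, add_mul]
      | single h s =>
        rw [single_mul_single, mul_one, hδs, hδs]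
        rw [show single (1:G) (s * t) = single (1:G) s * single 1 t by
              rw [single_mul_single, one_mul]]
        rw [mul_assoc, hcommδ h t, ← mul_assoc]
  have hext : ∀ x : MonoidAlgebra R G, δT (ihat ι x) = ihat ι (δ x) := by
    intro x
    induction x using MonoidAlgebra.induction_linear with
    | zero => rw [map_zero, map_zero, map_zero, map_zero]
    | add a b ha hb => rw [map_add, map_add, ha, hb, map_add, map_add]
    | single g r =>
      rw [ihat_single, hδs, show single (1:G) (ι r) = ihat ι (single 1 r) from
        (ihat_single ι 1 r).symm, ← map_mul, ← (hδlin r (single g 1)).1,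
        single_mul_single, one_mul, mul_one]
  refine ⟨δT, hlin, ?_, hext⟩
  intro a b
  induction a using MonoidAlgebra.induction_linear with
  | zero => simp
  | add a1 a2 h1 h2 =>
    rw [add_mul, map_add, h1, h2, map_add, map_add, add_mul, add_mul]
    abel
  | single g t =>
    induction b using MonoidAlgebra.induction_linear with
    | zero => simp
    | add b1 b2 h1 h2 =>
      rw [mul_add, map_add, h1, h2, map_add, map_add, mul_add, mul_add]
      abel
    | single h s =>
      rw [single_mul_single, hδs, hσs, hτs, hδs, hδs,
        show single (g * h) (1:R) = single g (1:R) * single h (1:R) by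
          rw [single_mul_single, one_mul],
        hδ, map_add, map_mul, map_mul,
        show single (1:G) (t * s) = single (1:G) t * single 1 s by
          rw [single_mul_single, one_mul],
        mul_shuffle t s _ _ (hcommδ g s), mul_shuffle t s _ _ (hcommσ g s),
        mul_add, mul_assoc, mul_assoc]

end TDE



/-- Extension lemma. Let `R ⊆ T` be rings with `1` (given by an injective unital
ring homomorphism `ι : R → T` mapping the center of `R` into the center of `T`) and `G` a group.
Given `R`-linear ring endomorphisms `σ, τ` of `R[G]` fixing the center of `R[G]` pointwise and an
`R`-linear `(σ,τ)`-derivation `δ` of `R[G]`, there are `T`-linear ring endomorphisms `σ_T, τ_T`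
of `T[G]` fixing the center of `T[G]` pointwise and extending `σ, τ`, and a `T`-linear
`(σ_T,τ_T)`-derivation `δ_T` of `T[G]` extending `δ`, along the coefficientwise map
`R[G] → T[G]`. -/
theorem twisted_derivation_extension {R T G : Type*} [Ring R] [Ring T] [Group G]
    (ι : R →+* T) (hι : Function.Injective ι)
    (hcen : ∀ r ∈ Subring.center R, ι r ∈ Subring.center T)
    (σ τ : MonoidAlgebra R G →+* MonoidAlgebra R G)
    (hσlin : ∀ (r : R) (x : MonoidAlgebra R G),
      σ (MonoidAlgebra.single 1 r * x) = MonoidAlgebra.single 1 r * σ x ∧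
      σ (x * MonoidAlgebra.single 1 r) = σ x * MonoidAlgebra.single 1 r)
    (hτlin : ∀ (r : R) (x : MonoidAlgebra R G),
      τ (MonoidAlgebra.single 1 r * x) = MonoidAlgebra.single 1 r * τ x ∧
      τ (x * MonoidAlgebra.single 1 r) = τ x * MonoidAlgebra.single 1 r)
    (hσc : ∀ x ∈ Subring.center (MonoidAlgebra R G), σ x = x)
    (hτc : ∀ x ∈ Subring.center (MonoidAlgebra R G), τ x = x)
    (δ : MonoidAlgebra R G →+ MonoidAlgebra R G)
    (hδlin : ∀ (r : R) (x : MonoidAlgebra R G),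
      δ (MonoidAlgebra.single 1 r * x) = MonoidAlgebra.single 1 r * δ x ∧
      δ (x * MonoidAlgebra.single 1 r) = δ x * MonoidAlgebra.single 1 r)
    (hδ : ∀ a b : MonoidAlgebra R G, δ (a * b) = δ a * τ b + σ a * δ b) :
    ∃ σT τT : MonoidAlgebra T G →+* MonoidAlgebra T G,
      (∀ (t : T) (x : MonoidAlgebra T G),
        σT (MonoidAlgebra.single 1 t * x) = MonoidAlgebra.single 1 t * σT x ∧
        σT (x * MonoidAlgebra.single 1 t) = σT x * MonoidAlgebra.single 1 t) ∧
      (∀ (t : T) (x : MonoidAlgebra T G),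
        τT (MonoidAlgebra.single 1 t * x) = MonoidAlgebra.single 1 t * τT x ∧
        τT (x * MonoidAlgebra.single 1 t) = τT x * MonoidAlgebra.single 1 t) ∧
      (∀ x ∈ Subring.center (MonoidAlgebra T G), σT x = x) ∧
      (∀ x ∈ Subring.center (MonoidAlgebra T G), τT x = x) ∧
      (∀ x : MonoidAlgebra R G,
        σT (MonoidAlgebra.ofCoeff (Finsupp.mapRange (⇑ι) ι.map_zero (x).coeff)) = MonoidAlgebra.ofCoeff (Finsupp.mapRange (⇑ι) ι.map_zero (σ x).coeff)) ∧
      (∀ x : MonoidAlgebra R G,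
        τT (MonoidAlgebra.ofCoeff (Finsupp.mapRange (⇑ι) ι.map_zero (x).coeff)) = MonoidAlgebra.ofCoeff (Finsupp.mapRange (⇑ι) ι.map_zero (τ x).coeff)) ∧
      ∃ δT : MonoidAlgebra T G →+ MonoidAlgebra T G,
        (∀ (t : T) (x : MonoidAlgebra T G),
          δT (MonoidAlgebra.single 1 t * x) = MonoidAlgebra.single 1 t * δT x ∧
          δT (x * MonoidAlgebra.single 1 t) = δT x * MonoidAlgebra.single 1 t) ∧
        (∀ a b : MonoidAlgebra T G, δT (a * b) = δT a * τT b + σT a * δT b) ∧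
        (∀ x : MonoidAlgebra R G,
          δT (MonoidAlgebra.ofCoeff (Finsupp.mapRange (⇑ι) ι.map_zero (x).coeff)) = MonoidAlgebra.ofCoeff (Finsupp.mapRange (⇑ι) ι.map_zero (δ x).coeff)) := by
  
  obtain ⟨σT, hσlinT, hσcT, hσext⟩ := TDE.exists_ext ι hcen σ hσlin hσc
  obtain ⟨τT, hτlinT, hτcT, hτext⟩ := TDE.exists_ext ι hcen τ hτlin hτc
  obtain ⟨δT, hδlinT, hδT, hδext⟩ :=
    TDE.exists_der ι hcen σ τ hσlin hτlin σT τT hσlinT hτlinT hσext hτext δ hδlin hδ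
  refine ⟨σT, τT, hσlinT, hτlinT, hσcT, hτcT, ?_, ?_, δT, hδlinT, hδT, ?_⟩ <;>
    intro x <;> rw [← TDE.ihat_apply, ← TDE.ihat_apply]
  · exact hσext x
  · exact hτext x
  · exact hδext x
end

section
/- Let R be a ring with 1, G a group, and let σ and τ be R-linear ring endomorphisms of the group ring RG. Let δ be an R-linear (σ,τ)-derivation of RG. Then for every g ∈ G, the elements δ(g), σ(g) and τ(g) lie in Z(R)G, i.e., all their coefficients lie in the center Z(R) of R. -/
lemma aux_central {R G : Type*} [Ring R] [Group G] (y : MonoidAlgebra R G)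
    (h : ∀ r : R, MonoidAlgebra.single (1 : G) r * y = y * MonoidAlgebra.single 1 r) :
    ∀ x : G, y.coeff x ∈ Subring.center R := by
  intro x
  rw [Subring.mem_center_iff]
  intro r
  have := congrArg (fun z : MonoidAlgebra R G => z.coeff x) (h r)
  simpa [MonoidAlgebra.single_one_mul_apply, MonoidAlgebra.mul_single_one_apply] using this

/-- Let `R` be a ring with `1`, `G` a group, `σ, τ` `R`-linear ring
endomorphisms of `R[G]` and `δ` an `R`-linear `(σ,τ)`-derivation of `R[G]`. Then for every
`g ∈ G` all coefficients of `δ(g)`, `σ(g)` and `τ(g)` lie in the center `Z(R)`. -/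
theorem twisted_derivation_coeffs_central {R G : Type*} [Ring R] [Group G]
    (σ τ : MonoidAlgebra R G →+* MonoidAlgebra R G)
    (hσlin : ∀ (r : R) (x : MonoidAlgebra R G),
      σ (MonoidAlgebra.single 1 r * x) = MonoidAlgebra.single 1 r * σ x ∧
      σ (x * MonoidAlgebra.single 1 r) = σ x * MonoidAlgebra.single 1 r)
    (hτlin : ∀ (r : R) (x : MonoidAlgebra R G),
      τ (MonoidAlgebra.single 1 r * x) = MonoidAlgebra.single 1 r * τ x ∧
      τ (x * MonoidAlgebra.single 1 r) = τ x * MonoidAlgebra.single 1 r)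
    (δ : MonoidAlgebra R G →+ MonoidAlgebra R G)
    (hδlin : ∀ (r : R) (x : MonoidAlgebra R G),
      δ (MonoidAlgebra.single 1 r * x) = MonoidAlgebra.single 1 r * δ x ∧
      δ (x * MonoidAlgebra.single 1 r) = δ x * MonoidAlgebra.single 1 r)
    (hδ : ∀ a b : MonoidAlgebra R G, δ (a * b) = δ a * τ b + σ a * δ b) :
    ∀ g x : G,
      (δ (MonoidAlgebra.single g 1)).coeff x ∈ Subring.center R ∧
      (σ (MonoidAlgebra.single g 1)).coeff x ∈ Subring.center R ∧
      (τ (MonoidAlgebra.single g 1)).coeff x ∈ Subring.center R := by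
  intro g x
  have key : ∀ r : R, MonoidAlgebra.single (1 : G) r * MonoidAlgebra.single g (1 : R)
      = MonoidAlgebra.single g 1 * MonoidAlgebra.single 1 r := by
    intro r
    simp [MonoidAlgebra.single_mul_single]
  refine ⟨aux_central _ (fun r => ?_) x, aux_central _ (fun r => ?_) x,
    aux_central _ (fun r => ?_) x⟩
  · rw [← (hδlin r _).1, key, (hδlin r _).2]
  · rw [← (hσlin r _).1, key, (hσlin r _).2]
  · rw [← (hτlin r _).1, key, (hτlin r _).2]
end

section
/- Let R be a ring with 1, G a group, and let σ and τ be R-linear ring endomorphisms of the group ring RG fixing the center Z(RG) pointwise. Let δ be an R-linear (σ,τ)-derivation of RG. If z is an element of the center Z(G) of G of finite order m, and RG has no m-torsion (i.e., m·β = 0 implies β = 0 for β ∈ RG), then δ(z) = 0. -/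
/-- Let `R` be a ring with `1`, `G` a group, `σ, τ` `R`-linear ring
endomorphisms of `R[G]` fixing the center of `R[G]` pointwise and `δ` an `R`-linear
`(σ,τ)`-derivation of `R[G]`. If `z` is a central element of `G` of finite order `m` and `R[G]`
has no `m`-torsion, then `δ(z) = 0`. -/
theorem twisted_derivation_central_group_element {R G : Type*} [Ring R] [Group G]
    (σ τ : MonoidAlgebra R G →+* MonoidAlgebra R G)
    (hσlin : ∀ (r : R) (x : MonoidAlgebra R G),
      σ (MonoidAlgebra.single 1 r * x) = MonoidAlgebra.single 1 r * σ x ∧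
      σ (x * MonoidAlgebra.single 1 r) = σ x * MonoidAlgebra.single 1 r)
    (hτlin : ∀ (r : R) (x : MonoidAlgebra R G),
      τ (MonoidAlgebra.single 1 r * x) = MonoidAlgebra.single 1 r * τ x ∧
      τ (x * MonoidAlgebra.single 1 r) = τ x * MonoidAlgebra.single 1 r)
    (hσc : ∀ x ∈ Subring.center (MonoidAlgebra R G), σ x = x)
    (hτc : ∀ x ∈ Subring.center (MonoidAlgebra R G), τ x = x)
    (δ : MonoidAlgebra R G →+ MonoidAlgebra R G)
    (hδlin : ∀ (r : R) (x : MonoidAlgebra R G),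
      δ (MonoidAlgebra.single 1 r * x) = MonoidAlgebra.single 1 r * δ x ∧
      δ (x * MonoidAlgebra.single 1 r) = δ x * MonoidAlgebra.single 1 r)
    (hδ : ∀ a b : MonoidAlgebra R G, δ (a * b) = δ a * τ b + σ a * δ b)
    (z : G) (hz : z ∈ Subgroup.center G) (m : ℕ) (hm : 0 < m) (hord : orderOf z = m)
    (hnt : ∀ β : MonoidAlgebra R G, m • β = 0 → β = 0) :
    δ (MonoidAlgebra.single z 1) = 0 := by
  set u : MonoidAlgebra R G := MonoidAlgebra.single z 1 with hu
  have hcomm : ∀ a : MonoidAlgebra R G, a * u = u * a := by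
    intro a
    induction a using MonoidAlgebra.induction with
    | zero => simp
    | single_add g r f _ _ ih =>
      rw [add_mul, mul_add, ih]
      congr 1
      show MonoidAlgebra.single g r * MonoidAlgebra.single z 1
        = MonoidAlgebra.single z 1 * MonoidAlgebra.single g r
      rw [MonoidAlgebra.single_mul_single, MonoidAlgebra.single_mul_single,
        mul_one, one_mul, (Subgroup.mem_center_iff.mp hz g)]
  have hucen : u ∈ Subring.center (MonoidAlgebra R G) := Subring.mem_center_iff.mpr hcomm
  have hσu : σ u = u := hσc u hucen
  have hτu : τ u = u := hτc u hucen
  have hδ1 : δ 1 = 0 := by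
    have h := hδ 1 1
    simp only [one_mul, mul_one, map_one] at h
    nth_rewrite 1 [← add_zero (δ 1)] at h
    exact (add_left_cancel h).symm
  have hpow : ∀ k : ℕ, δ (u ^ (k + 1)) = (k + 1) • (u ^ k * δ u) := by
    intro k
    induction k with
    | zero => simp
    | succ k ih =>
      have : u ^ (k + 2) = u ^ (k + 1) * u := pow_succ u (k + 1)
      rw [this, hδ, ih, hτu, map_pow, hσu]
      have hdu : δ u * u = u * δ u := hcomm (δ u)
      rw [smul_mul_assoc, mul_assoc, hdu, ← mul_assoc, ← pow_succ]
      rw [succ_nsmul (u ^ (k + 1) * δ u) (k + 1)]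
  have hum : u ^ m = 1 := by
    rw [hu, MonoidAlgebra.single_pow, one_pow, ← hord, pow_orderOf_eq_one]
    rfl
  obtain ⟨k, rfl⟩ : ∃ k, m = k + 1 := ⟨m - 1, (Nat.succ_pred_eq_of_pos hm).symm⟩
  have h0 : (k + 1) • (u ^ k * δ u) = 0 := by
    rw [← hpow, hum, hδ1]
  have h1 : u ^ k * δ u = 0 := hnt _ h0
  have : u * (u ^ k * δ u) = δ u := by
    rw [← mul_assoc, ← pow_succ', hum, one_mul]
  rw [← this, h1, mul_zero]
end

section
/- Let G be a finite group and let σ and τ be normalized automorphisms of the integral group ring ℤG that fix the center Z(ℤG) pointwise. Suppose ℤG satisfies (ZC2): every finite subgroup of V(ℤG) with the same order as G is rationally conjugate to G. Then there exist group automorphisms σ₁ and τ₁ of G and units u, v of the rational group algebra ℚG such that σ(g) = u⁻¹σ₁(g)u and τ(g) = v⁻¹τ₁(g)v for all g ∈ G, the ℤ-linear extensions of σ₁ and τ₁ to ℤG fix Z(ℤG) pointwise, and every ℤ-linear (σ₁,τ₁)-derivation of ℤG is (σ₁,τ₁)-inner (equivalently, H¹(ℤG, ₛ₁ℤGₜ₁)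 = 0). -/
set_option maxHeartbeats 1000000

open MonoidAlgebra Finsupp


/-- The augmentation map `ℤ[G] → ℤ`, sending every `g ∈ G` to `1`. -/
noncomputable def augZ (G : Type*) [Group G] : MonoidAlgebra ℤ G →ₐ[ℤ] ℤ :=
  MonoidAlgebra.lift ℤ ℤ G 1

/-- The canonical coefficientwise embedding `ℤ[G] → ℚ[G]`. -/
noncomputable def embQ (G : Type*) [Group G] :
    MonoidAlgebra ℤ G →ₐ[ℤ] MonoidAlgebra ℚ G :=
  MonoidAlgebra.lift ℤ (MonoidAlgebra ℚ G) G (MonoidAlgebra.of ℚ G)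


open MonoidAlgebra Finsupp
theorem embQ_single {G : Type*} [Group G] (g : G) (n : ℤ) : embQ G (MonoidAlgebra.single g n) = MonoidAlgebra.single g (n:ℚ) := by
  have h1 : (MonoidAlgebra.single g n : MonoidAlgebra ℤ G) = n • MonoidAlgebra.single g 1 := by
    simp
  have h2 : embQ G (MonoidAlgebra.single g (1:ℤ)) = MonoidAlgebra.single g (1:ℚ) := by
    simp [embQ, MonoidAlgebra.lift_single, MonoidAlgebra.of_apply]
  rw [h1, map_zsmul, h2, MonoidAlgebra.smul_single]
  norm_num
theorem embQ_apply {G : Type*} [Group G] (a : MonoidAlgebra ℤ G) (q : G) :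
    (embQ G a).coeff q = (a.coeff q : ℚ) := by
  induction a using MonoidAlgebra.induction with
  | zero => simp
  | single_add g n f _ _ ih =>
      rw [map_add, embQ_single]
      have hadd : (MonoidAlgebra.single g (↑n:ℚ) + (embQ G) f).coeff q
          = (MonoidAlgebra.single g (↑n:ℚ)).coeff q + ((embQ G) f).coeff q := rfl
      have hadd2 : ((MonoidAlgebra.single g n + f).coeff q)
          = (MonoidAlgebra.single g n).coeff q + f.coeff q := rfl
      rw [hadd, hadd2, ih, Int.cast_add]
      congr 1
      by_cases h : g = q
      · subst h; simp [Finsupp.single_apply]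
      · have e1 : (MonoidAlgebra.single g (↑n:ℚ)).coeff q = 0 := Finsupp.single_eq_of_ne' h
        have e2 : (MonoidAlgebra.single g n).coeff q = 0 := Finsupp.single_eq_of_ne' h
        rw [e1, e2, Int.cast_zero]
theorem embQ_inj {G : Type*} [Group G] : Function.Injective (embQ G) := by
  intro a b h
  ext q
  have := congrArg (fun z => z.coeff q) h
  simpa only [embQ_apply, Int.cast_injective.eq_iff] using this


section Deriv
set_option linter.unusedSectionVars false
variable {G : Type*} [Group G] [Fintype G] (σ₁ τ₁ : G ≃* G)

/-- twisted conjugation action -/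
private def dact (g q : G) : G := σ₁ g * q * (τ₁ g)⁻¹

private theorem dact_mul (g h q : G) : dact σ₁ τ₁ g (dact σ₁ τ₁ h q) = dact σ₁ τ₁ (g * h) q := by
  simp only [dact, map_mul, mul_inv_rev]; group

private theorem dact_one (q : G) : dact σ₁ τ₁ 1 q = q := by simp [dact]

private theorem dact_inv (g q : G) : dact σ₁ τ₁ g⁻¹ (dact σ₁ τ₁ g q) = q := by
  rw [dact_mul, inv_mul_cancel, dact_one]

private theorem dact_inv' (g q : G) : dact σ₁ τ₁ g (dact σ₁ τ₁ g⁻¹ q) = q := by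
  rw [dact_mul, mul_inv_cancel, dact_one]

private def dst : Setoid G :=
  ⟨fun a b => ∃ g, dact σ₁ τ₁ g b = a,
    ⟨fun a => ⟨1, dact_one σ₁ τ₁ a⟩,
     fun {a b} h => by
        obtain ⟨g, hg⟩ := h
        exact ⟨g⁻¹, by rw [← hg, dact_inv]⟩,
     fun {a b c} h1 h2 => by
        obtain ⟨g, hg⟩ := h1; obtain ⟨h, hh⟩ := h2
        exact ⟨g * h, by rw [← dact_mul, hh, hg]⟩⟩⟩

private noncomputable def drep (q : G) : G := (Quotient.mk (dst σ₁ τ₁) q).out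

private theorem drep_spec (q : G) : ∃ g, dact σ₁ τ₁ g (drep σ₁ τ₁ q) = q := by
  have h : (dst σ₁ τ₁).r (drep σ₁ τ₁ q) q :=
    Quotient.exact (Quotient.out_eq (Quotient.mk (dst σ₁ τ₁) q))
  exact (dst σ₁ τ₁).symm h

private theorem drep_dact (g q : G) : drep σ₁ τ₁ (dact σ₁ τ₁ g q) = drep σ₁ τ₁ q := by
  unfold drep
  congr 1
  exact Quotient.sound ⟨g, rfl⟩

variable (δ : MonoidAlgebra ℤ G →+ MonoidAlgebra ℤ G)

private noncomputable def dF (g q : G) : ℤ := (δ (MonoidAlgebra.single g 1)).coeff (q * τ₁ g)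

variable {σ₁ τ₁ δ}
variable (hd : ∀ a b : MonoidAlgebra ℤ G,
    δ (a * b) = δ a * MonoidAlgebra.mapDomainRingHom ℤ τ₁.toMonoidHom b
      + MonoidAlgebra.mapDomainRingHom ℤ σ₁.toMonoidHom a * δ b)

private theorem hTsingle (g : G) (n : ℤ) :
    MonoidAlgebra.mapDomainRingHom ℤ τ₁.toMonoidHom (MonoidAlgebra.single g n)
      = MonoidAlgebra.single (τ₁ g) n := by
  simp [MonoidAlgebra.mapDomainRingHom, MonoidAlgebra.mapDomain_single]

include hd

private theorem dF_one (q : G) : dF τ₁ δ 1 q = 0 := by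
  have h1 : δ 1 = 0 := by
    have := hd 1 1
    simp only [mul_one, map_one, one_mul] at this
    exact (add_eq_left.mp this.symm)
  unfold dF
  rw [show (MonoidAlgebra.single (1:G) (1:ℤ)) = (1 : MonoidAlgebra ℤ G) from rfl, h1]
  rfl

private theorem dF_cocycle (g h q : G) :
    dF τ₁ δ (g * h) q = dF τ₁ δ g q + dF τ₁ δ h (dact σ₁ τ₁ g⁻¹ q) := by
  unfold dF
  have e : (MonoidAlgebra.single (g*h) (1:ℤ)) =
      MonoidAlgebra.single g 1 * MonoidAlgebra.single h 1 := by
    rw [MonoidAlgebra.single_mul_single, mul_one]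
  rw [e, hd, hTsingle, hTsingle]
  have hadd : ∀ (a b : MonoidAlgebra ℤ G) (y : G), (a + b).coeff y = a.coeff y + b.coeff y := fun _ _ _ => rfl
  rw [hadd, MonoidAlgebra.mul_single_apply, MonoidAlgebra.single_mul_apply, mul_one, one_mul]
  congr 2
  · rw [map_mul]; group
  · simp only [dact, map_mul, map_inv, inv_inv]; group

private theorem dF_pow (s p : G) (hs : dact σ₁ τ₁ s p = p) :
    ∀ k : ℕ, dF τ₁ δ (s ^ k) p = k * dF τ₁ δ s p := by
  have hfix : dact σ₁ τ₁ s⁻¹ p = p := by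
    conv_lhs => rw [← hs]
    exact dact_inv σ₁ τ₁ s p
  intro k
  induction k with
  | zero => simpa using dF_one hd p
  | succ k ih =>
      rw [pow_succ', dF_cocycle hd, hfix, ih]
      push_cast
      ring

private theorem dF_stab (s p : G) (hs : dact σ₁ τ₁ s p = p) : dF τ₁ δ s p = 0 := by
  have h0 : dF τ₁ δ (s ^ orderOf s) p = (orderOf s : ℤ) * dF τ₁ δ s p := dF_pow hd s p hs _
  rw [pow_orderOf_eq_one, dF_one hd] at h0
  have hpos : (orderOf s : ℤ) ≠ 0 := by
    exact_mod_cast (orderOf_pos s).ne'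
  exact (mul_eq_zero.mp h0.symm).resolve_left hpos

omit hd in
private noncomputable def dx (q : G) : ℤ :=
  dF τ₁ δ (Classical.choose (drep_spec σ₁ τ₁ q)) q

private theorem dx_wd (q r : G) (hr : dact σ₁ τ₁ r (drep σ₁ τ₁ q) = q) :
    dF τ₁ δ r q = dx (σ₁ := σ₁) (τ₁ := τ₁) (δ := δ) q := by
  set r0 := Classical.choose (drep_spec σ₁ τ₁ q) with hr0def
  have hr0 : dact σ₁ τ₁ r0 (drep σ₁ τ₁ q) = q := Classical.choose_spec (drep_spec σ₁ τ₁ q)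
  have hinvq : dact σ₁ τ₁ r⁻¹ q = drep σ₁ τ₁ q := by
    conv_lhs => rw [← hr]
    exact dact_inv σ₁ τ₁ r _
  have hsfix : dact σ₁ τ₁ (r⁻¹ * r0) (drep σ₁ τ₁ q) = drep σ₁ τ₁ q := by
    rw [← dact_mul, hr0, hinvq]
  have hco := dF_cocycle hd r (r⁻¹ * r0) q
  rw [hinvq, dF_stab hd _ _ hsfix, add_zero] at hco
  have he : r * (r⁻¹ * r0) = r0 := by group
  rw [he] at hco
  rw [← hco]
  rfl

private theorem dF_eq (g q : G) :
    dF τ₁ δ g q = dx (σ₁ := σ₁) (τ₁ := τ₁) (δ := δ) q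
      - dx (σ₁ := σ₁) (τ₁ := τ₁) (δ := δ) (dact σ₁ τ₁ g⁻¹ q) := by
  set q' := dact σ₁ τ₁ g⁻¹ q with hq'
  have hgq' : dact σ₁ τ₁ g q' = q := dact_inv' σ₁ τ₁ g q
  have hrepq : drep σ₁ τ₁ q' = drep σ₁ τ₁ q := by
    have h := drep_dact σ₁ τ₁ g q'
    rw [hgq'] at h
    exact h.symm
  set r' := Classical.choose (drep_spec σ₁ τ₁ q') with hr'def
  have hr' : dact σ₁ τ₁ r' (drep σ₁ τ₁ q') = q' := Classical.choose_spec (drep_spec σ₁ τ₁ q')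
  have hx' : dx (σ₁ := σ₁) (τ₁ := τ₁) (δ := δ) q' = dF τ₁ δ r' q' := rfl
  have hgr : dact σ₁ τ₁ (g * r') (drep σ₁ τ₁ q) = q := by
    rw [← dact_mul, ← hrepq, hr', hgq']
  have hxq := dx_wd hd q (g * r') hgr
  have hsplit := dF_cocycle hd g r' q
  rw [hxq] at hsplit
  rw [← hq'] at hsplit
  rw [← hx'] at hsplit
  linarith

end Deriv


private theorem deriv_inner {G : Type*} [Group G] [Fintype G] (σ₁ τ₁ : G ≃* G)
    (δ : MonoidAlgebra ℤ G →+ MonoidAlgebra ℤ G)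
    (hd : ∀ a b : MonoidAlgebra ℤ G,
      δ (a * b) = δ a * MonoidAlgebra.mapDomainRingHom ℤ τ₁.toMonoidHom b
        + MonoidAlgebra.mapDomainRingHom ℤ σ₁.toMonoidHom a * δ b) :
    ∃ x : MonoidAlgebra ℤ G, ∀ a : MonoidAlgebra ℤ G,
      δ a = x * MonoidAlgebra.mapDomainRingHom ℤ τ₁.toMonoidHom a
        - MonoidAlgebra.mapDomainRingHom ℤ σ₁.toMonoidHom a * x := by
  classical
  set X : MonoidAlgebra ℤ G :=
    MonoidAlgebra.ofCoeff <| Finsupp.equivFunOnFinite.symm (dx (σ₁ := σ₁) (τ₁ := τ₁) (δ := δ)) with hXdef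
  have hX : ∀ q : G, X.coeff q = dx (σ₁ := σ₁) (τ₁ := τ₁) (δ := δ) q := fun q => rfl
  have key : ∀ g : G, δ (MonoidAlgebra.single g 1)
      = X * MonoidAlgebra.single (τ₁ g) 1 - MonoidAlgebra.single (σ₁ g) 1 * X := by
    intro g
    apply MonoidAlgebra.ext; apply Finsupp.ext
    intro q
    have hsub : (X * MonoidAlgebra.single (τ₁ g) (1:ℤ) - MonoidAlgebra.single (σ₁ g) (1:ℤ) * X).coeff q
        = (X * MonoidAlgebra.single (τ₁ g) (1:ℤ)).coeff q - (MonoidAlgebra.single (σ₁ g) (1:ℤ) * X).coeff q := rfl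
    rw [hsub, MonoidAlgebra.mul_single_apply, MonoidAlgebra.single_mul_apply,
      mul_one, one_mul, hX, hX]
    have h1 : (δ (MonoidAlgebra.single g 1)).coeff q = dF τ₁ δ g (q * (τ₁ g)⁻¹) := by
      unfold dF
      congr 1
      group
    rw [h1, dF_eq hd]
    congr 2
    simp only [dact, map_inv, inv_inv]
    group
  have keyn : ∀ (g : G) (n : ℤ), δ (MonoidAlgebra.single g n)
      = X * MonoidAlgebra.mapDomainRingHom ℤ τ₁.toMonoidHom (MonoidAlgebra.single g n)
        - MonoidAlgebra.mapDomainRingHom ℤ σ₁.toMonoidHom (MonoidAlgebra.single g n) * X := by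
    intro g n
    have e : (MonoidAlgebra.single g n : MonoidAlgebra ℤ G) = n • MonoidAlgebra.single g 1 := by
      simp
    rw [e, map_zsmul, map_zsmul, map_zsmul, hTsingle, hTsingle (τ₁ := σ₁),
      mul_smul_comm, smul_mul_assoc, ← smul_sub, key]
  refine ⟨X, fun a => ?_⟩
  induction a using MonoidAlgebra.induction with
  | zero => simp
  | single_add g n f _ _ ih =>
      rw [map_add, map_add, map_add, mul_add, add_mul, ih, keyn]
      abel



private theorem aux_exists {G : Type*} [Group G] [Fintype G]
    (σ : MonoidAlgebra ℤ G ≃+* MonoidAlgebra ℤ G)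
    (hσn : ∀ a : MonoidAlgebra ℤ G, augZ G (σ a) = augZ G a)
    (hZC2 : ∀ H : Subgroup (MonoidAlgebra ℤ G)ˣ,
      (∀ w ∈ H, augZ G (w : MonoidAlgebra ℤ G) = 1) →
      Nat.card H = Nat.card G →
      ∃ w : (MonoidAlgebra ℚ G)ˣ,
        (fun a : MonoidAlgebra ℚ G => ↑w⁻¹ * a * ↑w) ''
            ((fun z : (MonoidAlgebra ℤ G)ˣ => embQ G (z : MonoidAlgebra ℤ G)) ''
              (H : Set (MonoidAlgebra ℤ G)ˣ)) =
          Set.range (fun g : G => (MonoidAlgebra.of ℚ G g : MonoidAlgebra ℚ G))) :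
    ∃ (σ₁ : G ≃* G) (w : (MonoidAlgebra ℚ G)ˣ),
      ∀ g : G, MonoidAlgebra.of ℚ G (σ₁ g) = ↑w⁻¹ * embQ G (σ (MonoidAlgebra.of ℤ G g)) * ↑w := by
  classical
  let f : G →* (MonoidAlgebra ℤ G)ˣ :=
    (Units.map σ.toRingHom.toMonoidHom).comp (MonoidAlgebra.of ℤ G).toHomUnits
  have hfval : ∀ g, (f g : MonoidAlgebra ℤ G) = σ (MonoidAlgebra.of ℤ G g) := fun g => rfl
  have hfinj : Function.Injective f := by
    intro a b hab
    have h2 := congrArg (Units.val) hab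
    rw [hfval, hfval] at h2
    exact MonoidAlgebra.of_injective (σ.injective h2)
  have hcard : Nat.card f.range = Nat.card G :=
    (Nat.card_congr (MonoidHom.ofInjective hfinj).toEquiv).symm
  have haug : ∀ w ∈ f.range, augZ G (w : MonoidAlgebra ℤ G) = 1 := by
    rintro w ⟨g, rfl⟩
    rw [hfval, hσn]
    simp [augZ]
  obtain ⟨w, hw⟩ := hZC2 f.range haug hcard
  have hmem : ∀ g : G, (↑w⁻¹ * embQ G (σ (MonoidAlgebra.of ℤ G g)) * ↑w) ∈
      Set.range (fun g : G => (MonoidAlgebra.of ℚ G g : MonoidAlgebra ℚ G)) := by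
    intro g
    rw [← hw]
    refine ⟨embQ G (σ (MonoidAlgebra.of ℤ G g)), ⟨f g, ?_, rfl⟩, rfl⟩
    exact ⟨g, rfl⟩
  let s' : G → G := fun g => Classical.choose (hmem g)
  have hs' : ∀ g, MonoidAlgebra.of ℚ G (s' g)
      = ↑w⁻¹ * embQ G (σ (MonoidAlgebra.of ℤ G g)) * ↑w :=
    fun g => Classical.choose_spec (hmem g)
  have hmul : ∀ g h, s' (g * h) = s' g * s' h := by
    intro g h
    apply MonoidAlgebra.of_injective (R := ℚ)
    rw [map_mul, hs', hs', hs', map_mul, map_mul, map_mul]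
    simp [mul_assoc, Units.mul_inv_cancel_left]
  have hsurj : Function.Surjective s' := by
    intro h
    have hmem2 : (MonoidAlgebra.of ℚ G h : MonoidAlgebra ℚ G) ∈
        (fun a : MonoidAlgebra ℚ G => ↑w⁻¹ * a * ↑w) ''
            ((fun z : (MonoidAlgebra ℤ G)ˣ => embQ G (z : MonoidAlgebra ℤ G)) ''
              (f.range : Set (MonoidAlgebra ℤ G)ˣ)) := by
      rw [hw]; exact ⟨h, rfl⟩
    obtain ⟨a, ⟨z, hz, rfl⟩, ha⟩ := hmem2
    obtain ⟨g, rfl⟩ := hz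
    refine ⟨g, MonoidAlgebra.of_injective (R := ℚ) ?_⟩
    rw [hs']
    exact ha
  have hbij : Function.Bijective (MonoidHom.mk' s' hmul) :=
    ⟨Finite.injective_iff_surjective.mpr hsurj, hsurj⟩
  exact ⟨MulEquiv.ofBijective _ hbij, w, hs'⟩

private theorem center_fix {G : Type*} [Group G] [Fintype G]
    (σ : MonoidAlgebra ℤ G ≃+* MonoidAlgebra ℤ G)
    (hσc : ∀ x ∈ Subring.center (MonoidAlgebra ℤ G), σ x = x)
    (σ₁ : G ≃* G) (w : (MonoidAlgebra ℚ G)ˣ)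
    (hs : ∀ g : G, MonoidAlgebra.of ℚ G (σ₁ g)
      = ↑w⁻¹ * embQ G (σ (MonoidAlgebra.of ℤ G g)) * ↑w) :
    ∀ x ∈ Subring.center (MonoidAlgebra ℤ G),
      MonoidAlgebra.mapDomainRingHom ℤ σ₁.toMonoidHom x = x := by
  have hsing : ∀ (g : G) (n : ℤ),
      embQ G (MonoidAlgebra.mapDomainRingHom ℤ σ₁.toMonoidHom (MonoidAlgebra.single g n))
        = ↑w⁻¹ * embQ G (σ (MonoidAlgebra.single g n)) * ↑w := by
    intro g n
    rw [hTsingle (τ₁ := σ₁), embQ_single]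
    have e : (MonoidAlgebra.single g n : MonoidAlgebra ℤ G) = n • MonoidAlgebra.single g 1 := by
      simp
    rw [e, map_zsmul, map_zsmul, mul_smul_comm, smul_mul_assoc]
    rw [show (MonoidAlgebra.single g (1:ℤ)) = MonoidAlgebra.of ℤ G g from rfl, ← hs g]
    show MonoidAlgebra.single (σ₁ g) (n:ℚ) = n • MonoidAlgebra.single (σ₁ g) (1:ℚ)
    rw [MonoidAlgebra.smul_single]
    norm_num
  have hlin : ∀ a : MonoidAlgebra ℤ G,
      embQ G (MonoidAlgebra.mapDomainRingHom ℤ σ₁.toMonoidHom a)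
        = ↑w⁻¹ * embQ G (σ a) * ↑w := by
    intro a
    induction a using MonoidAlgebra.induction with
    | zero => simp
    | single_add g n fb _ _ ih =>
        rw [map_add, map_add, map_add, map_add, mul_add, add_mul, ih, hsing]
  intro x hx
  apply embQ_inj
  have hcomm : (↑w : MonoidAlgebra ℚ G) * embQ G x = embQ G x * ↑w := by
    have hof : ∀ g : G, embQ G (MonoidAlgebra.of ℤ G g) = MonoidAlgebra.of ℚ G g := by
      intro g
      rw [show (MonoidAlgebra.of ℤ G g) = MonoidAlgebra.single g (1:ℤ) from rfl, embQ_single]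
      norm_num
    have hall : ∀ b : MonoidAlgebra ℚ G, b * embQ G x = embQ G x * b := by
      intro b
      induction b using MonoidAlgebra.induction_on with
      | of g =>
          rw [← hof, ← map_mul, ← map_mul]
          congr 1
          exact Subring.mem_center_iff.mp hx _
      | add f g hf hg => rw [add_mul, mul_add, hf, hg]
      | smul r f hf => rw [smul_mul_assoc, mul_smul_comm, hf]
    exact hall ↑w
  rw [hlin, hσc x hx, mul_assoc, ← hcomm, Units.inv_mul_cancel_left]

/-- Let `G` be a finite group and `σ, τ` normalized automorphisms of `ℤ[G]`
fixing the center of `ℤ[G]` pointwise. If `ℤ[G]` satisfies (ZC2), then there are group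
automorphisms `σ₁, τ₁` of `G` and units `u, v` of `ℚ[G]` with `σ(g) = u⁻¹σ₁(g)u` and
`τ(g) = v⁻¹τ₁(g)v` for all `g ∈ G`, whose `ℤ`-linear extensions to `ℤ[G]` fix the center of
`ℤ[G]` pointwise, and every `ℤ`-linear `(σ₁,τ₁)`-derivation of `ℤ[G]` is `(σ₁,τ₁)`-inner. -/
theorem twisted_derivation_ZC2_aut {G : Type*} [Group G] [Fintype G]
    (σ τ : MonoidAlgebra ℤ G ≃+* MonoidAlgebra ℤ G)
    (hσn : ∀ a : MonoidAlgebra ℤ G, augZ G (σ a) = augZ G a)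
    (hτn : ∀ a : MonoidAlgebra ℤ G, augZ G (τ a) = augZ G a)
    (hσc : ∀ x ∈ Subring.center (MonoidAlgebra ℤ G), σ x = x)
    (hτc : ∀ x ∈ Subring.center (MonoidAlgebra ℤ G), τ x = x)
    (hZC2 : ∀ H : Subgroup (MonoidAlgebra ℤ G)ˣ,
      (∀ w ∈ H, augZ G (w : MonoidAlgebra ℤ G) = 1) →
      Nat.card H = Nat.card G →
      ∃ w : (MonoidAlgebra ℚ G)ˣ,
        (fun a : MonoidAlgebra ℚ G => ↑w⁻¹ * a * ↑w) ''
            ((fun z : (MonoidAlgebra ℤ G)ˣ => embQ G (z : MonoidAlgebra ℤ G)) ''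
              (H : Set (MonoidAlgebra ℤ G)ˣ)) =
          Set.range (fun g : G => (MonoidAlgebra.of ℚ G g : MonoidAlgebra ℚ G))) :
    ∃ (σ₁ τ₁ : G ≃* G) (u v : (MonoidAlgebra ℚ G)ˣ),
      (∀ g : G, embQ G (σ (MonoidAlgebra.of ℤ G g)) =
        ↑u⁻¹ * MonoidAlgebra.of ℚ G (σ₁ g) * ↑u) ∧
      (∀ g : G, embQ G (τ (MonoidAlgebra.of ℤ G g)) =
        ↑v⁻¹ * MonoidAlgebra.of ℚ G (τ₁ g) * ↑v) ∧
      (∀ x ∈ Subring.center (MonoidAlgebra ℤ G),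
        MonoidAlgebra.mapDomainRingHom ℤ σ₁.toMonoidHom x = x) ∧
      (∀ x ∈ Subring.center (MonoidAlgebra ℤ G),
        MonoidAlgebra.mapDomainRingHom ℤ τ₁.toMonoidHom x = x) ∧
      ∀ δ : MonoidAlgebra ℤ G →+ MonoidAlgebra ℤ G,
        (∀ a b : MonoidAlgebra ℤ G,
          δ (a * b) = δ a * MonoidAlgebra.mapDomainRingHom ℤ τ₁.toMonoidHom b
            + MonoidAlgebra.mapDomainRingHom ℤ σ₁.toMonoidHom a * δ b) →
        ∃ x : MonoidAlgebra ℤ G, ∀ a : MonoidAlgebra ℤ G,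
          δ a = x * MonoidAlgebra.mapDomainRingHom ℤ τ₁.toMonoidHom a
            - MonoidAlgebra.mapDomainRingHom ℤ σ₁.toMonoidHom a * x := by
  obtain ⟨σ₁, wσ, hsσ⟩ := aux_exists σ hσn hZC2
  obtain ⟨τ₁, wτ, hsτ⟩ := aux_exists τ hτn hZC2
  refine ⟨σ₁, τ₁, wσ⁻¹, wτ⁻¹, ?_, ?_, center_fix σ hσc σ₁ wσ hsσ,
    center_fix τ hτc τ₁ wτ hsτ, fun δ hd => deriv_inner σ₁ τ₁ δ hd⟩
  · intro g
    rw [inv_inv, hsσ g]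
    simp [mul_assoc, Units.mul_inv_cancel_left, Units.mul_inv]
  · intro g
    rw [inv_inv, hsτ g]
    simp [mul_assoc, Units.mul_inv_cancel_left, Units.mul_inv]
end

section
/- Let G be an abelian group and R a commutative ring with 1 such that either R has no additive torsion elements or, if R has p-torsion elements for a prime p, then p does not divide the order of any element of G. Let σ and τ be two distinct R-algebra endomorphisms of the group ring RG. If there exists b ∈ RG such that τ(b) − σ(b) is a unit of RG, then every R-linear (σ,τ)-derivation δ of RG satisfies δ(a) = (τ(b) − σ(b))⁻¹ · δ(b) · (τ(a) − σ(a)) for all a ∈ RG. -/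
/-- Let `G` be an abelian group and `R` a commutative ring with `1` such that
if `R` has `p`-torsion elements for a prime `p` then `p` divides the order of no element of `G`.
Let `σ ≠ τ` be `R`-algebra endomorphisms of `R[G]`. If there is `b ∈ R[G]` with
`τ(b) − σ(b)` a unit of `R[G]`, then every `R`-linear `(σ,τ)`-derivation `δ` of `R[G]` satisfies
`δ(a) = (τ(b) − σ(b))⁻¹·δ(b)·(τ(a) − σ(a))` for all `a`. -/
theorem twisted_derivation_commutative_group_algebra {R G : Type*} [CommRing R] [CommGroup G]
    (htor : ∀ p : ℕ, p.Prime → (∃ r : R, r ≠ 0 ∧ p • r = 0) → ∀ g : G, ¬ p ∣ orderOf g)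
    (σ τ : MonoidAlgebra R G →ₐ[R] MonoidAlgebra R G) (hστ : σ ≠ τ)
    (b : MonoidAlgebra R G) (w : (MonoidAlgebra R G)ˣ)
    (hw : (w : MonoidAlgebra R G) = τ b - σ b)
    (δ : MonoidAlgebra R G →ₗ[R] MonoidAlgebra R G)
    (hδ : ∀ a c : MonoidAlgebra R G, δ (a * c) = δ a * τ c + σ a * δ c) :
    ∀ a : MonoidAlgebra R G, δ a = ↑w⁻¹ * δ b * (τ a - σ a) := by
  intro a
  have key : δ a * (w : MonoidAlgebra R G) = δ b * (τ a - σ a) := by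
    have h1 := hδ a b
    have h2 := hδ b a
    rw [mul_comm a b] at h1
    rw [h2] at h1
    rw [hw]
    linear_combination -h1
  calc δ a = ↑w⁻¹ * (δ a * ↑w) := by
        rw [← mul_assoc, mul_comm (↑w⁻¹ : MonoidAlgebra R G), mul_assoc,
          w.inv_mul, mul_one]
      _ = ↑w⁻¹ * δ b * (τ a - σ a) := by rw [key, mul_assoc]
end

section
/- There exists a group G which is both locally finite and nilpotent such that for every field F there exist an F-linear ring endomorphism σ of the group algebra FG fixing the center Z(FG) pointwise and an F-linear (σ, id)-derivation δ of FG which is not (σ, id)-inner: there is no x ∈ FG with δ(a) = xa − σ(a)x for all a ∈ FG. Concretely, one may take G to be the restricted direct product (direct sum) of countably many copies of a finite non-abelian nilpotent group H, σ the identity, and δ(α) = Σ_i (x_iα − αx_i), where x_i is a fixed non-central element of the i-th copy of H (the sum is finite on each element of FG). -/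
universe u

open Function MonoidAlgebra

abbrev Hgrp := DihedralGroup 4

def finSupp : Subgroup (ℕ → Hgrp) where
  carrier := {f | (Function.mulSupport f).Finite}
  one_mem' := by simp [Function.mulSupport_one]
  mul_mem' := fun {f g} hf hg =>
    (hf.union hg).subset (Function.mulSupport_mul f g)
  inv_mem' := fun {f} hf => by
    simpa [Function.mulSupport_inv] using hf

abbrev Ggrp : Type := ↥finSupp

lemma Ggrp.comm {g k : Ggrp} (h : ∀ j, g.1 j = 1 ∨ k.1 j = 1) : g * k = k * g := by
  ext j
  rcases h j with h1 | h1 <;>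
    simp [Subgroup.coe_mul, Pi.mul_apply, h1]

noncomputable def tG (i : ℕ) : Ggrp :=
  ⟨Pi.mulSingle i (DihedralGroup.r 1),
   (Set.finite_singleton i).subset (Pi.mulSupport_mulSingle_subset)⟩

noncomputable def Tg (g : Ggrp) : Finset ℕ := g.2.toFinset

lemma mem_Tg {g : Ggrp} {i : ℕ} : i ∈ Tg g ↔ g.1 i ≠ 1 := by
  unfold Tg; exact Set.Finite.mem_toFinset (hs := g.2)

lemma tG_comm {g : Ggrp} {i : ℕ} (hi : i ∉ Tg g) : tG i * g = g * tG i := by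
  apply Ggrp.comm
  intro j
  rcases eq_or_ne j i with rfl | hj
  · right; simpa [mem_Tg] using hi
  · left; simp [tG, Pi.mulSingle_apply, hj]

variable (F : Type u) [Field F]

noncomputable def sF (A : Finset ℕ) : MonoidAlgebra F Ggrp :=
  ∑ i ∈ A, MonoidAlgebra.of F Ggrp (tG i)

noncomputable def Dmap (g : Ggrp) : MonoidAlgebra F Ggrp :=
  sF F (Tg g) * MonoidAlgebra.of F Ggrp g - MonoidAlgebra.of F Ggrp g * sF F (Tg g)

lemma Dmap_eq {A : Finset ℕ} {g : Ggrp} (hA : Tg g ⊆ A) :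
    Dmap F g = sF F A * MonoidAlgebra.of F Ggrp g - MonoidAlgebra.of F Ggrp g * sF F A := by
  have hsplit : sF F A = sF F (Tg g) + ∑ i ∈ A \ Tg g, MonoidAlgebra.of F Ggrp (tG i) := by
    rw [sF, ← Finset.sum_sdiff hA]; abel
  have hcomm : (∑ i ∈ A \ Tg g, MonoidAlgebra.of F Ggrp (tG i)) * MonoidAlgebra.of F Ggrp g
      = MonoidAlgebra.of F Ggrp g * ∑ i ∈ A \ Tg g, MonoidAlgebra.of F Ggrp (tG i) := by
    rw [Finset.sum_mul, Finset.mul_sum]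
    refine Finset.sum_congr rfl fun i hi => ?_
    rw [← map_mul, ← map_mul, tG_comm (Finset.mem_sdiff.mp hi).2]
  rw [hsplit, add_mul, mul_add, hcomm, Dmap]
  abel

lemma Tg_mul_subset (g k : Ggrp) : Tg (g * k) ⊆ Tg g ∪ Tg k := by
  intro i hi
  rw [mem_Tg] at hi
  simp only [Finset.mem_union, mem_Tg]
  by_contra hc
  push_neg at hc
  exact hi (by simp [Subgroup.coe_mul, Pi.mul_apply, hc.1, hc.2])

lemma Dmap_mul (g k : Ggrp) :
    Dmap F (g * k) = Dmap F g * MonoidAlgebra.of F Ggrp k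
      + MonoidAlgebra.of F Ggrp g * Dmap F k := by
  set A := Tg g ∪ Tg k with hA
  rw [Dmap_eq F (Tg_mul_subset g k), Dmap_eq F (Finset.subset_union_left (s₂ := Tg k)),
    Dmap_eq F (Finset.subset_union_right (s₁ := Tg g)), map_mul]
  noncomm_ring

noncomputable def deltaMap : MonoidAlgebra F Ggrp →ₗ[F] MonoidAlgebra F Ggrp :=
  (Finsupp.linearCombination F (Dmap F)).comp (MonoidAlgebra.coeffLinearEquiv F).toLinearMap

lemma deltaMap_single (g : Ggrp) (c : F) :
    deltaMap F (MonoidAlgebra.single g c) = c • Dmap F g :=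
  Finsupp.linearCombination_single F c g

lemma deltaMap_leibniz (a b : MonoidAlgebra F Ggrp) :
    deltaMap F (a * b) = deltaMap F a * b + a * deltaMap F b := by
  induction a using MonoidAlgebra.induction_linear with
  | zero => simp
  | add f g hf hg =>
    rw [add_mul, map_add, hf, hg, map_add]
    noncomm_ring
  | single g c =>
    induction b using MonoidAlgebra.induction_linear with
    | zero => simp
    | add f k hf hk =>
      rw [mul_add, map_add, hf, hk, map_add]
      noncomm_ring
    | single k d =>
      rw [MonoidAlgebra.single_mul_single, deltaMap_single, deltaMap_single, deltaMap_single,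
        Dmap_mul]
      have h1 : (MonoidAlgebra.single k d : MonoidAlgebra F Ggrp)
          = d • MonoidAlgebra.of F Ggrp k := by
        rw [MonoidAlgebra.of_apply, MonoidAlgebra.smul_single', mul_one]
      have h2 : (MonoidAlgebra.single g c : MonoidAlgebra F Ggrp)
          = c • MonoidAlgebra.of F Ggrp g := by
        rw [MonoidAlgebra.of_apply, MonoidAlgebra.smul_single', mul_one]
      rw [h1, h2, smul_add]
      simp only [smul_mul_assoc, mul_smul_comm, smul_smul, mul_comm d c]

lemma Ggrp.locallyFinite (Hs : Subgroup Ggrp) (hFG : Hs.FG) : Finite Hs := by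
  obtain ⟨T, hT⟩ := hFG
  set S : Set ℕ := ⋃ g ∈ (T : Set Ggrp), Function.mulSupport (g : Ggrp).1 with hSdef
  have hS : S.Finite := Set.Finite.biUnion T.finite_toSet fun g _ => g.2
  let K : Subgroup Ggrp :=
    { carrier := {g | Function.mulSupport g.1 ⊆ S}
      one_mem' := by
        simp only [Set.mem_setOf_eq, OneMemClass.coe_one, Function.mulSupport_one]
        exact Set.empty_subset _
      mul_mem' := fun {f g} hf hg => by
        refine subset_trans ?_ (Set.union_subset hf hg)
        exact (Function.mulSupport_mul f.1 g.1)
      inv_mem' := fun {f} hf => by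
        simpa only [Set.mem_setOf_eq, Subgroup.coe_inv, Function.mulSupport_inv] using hf }
  have hle : Hs ≤ K := by
    rw [← hT, Subgroup.closure_le]
    intro g hg
    show Function.mulSupport (g : Ggrp).1 ⊆ S
    rw [hSdef]
    exact Set.subset_biUnion_of_mem (u := fun g : Ggrp => Function.mulSupport g.1) hg
  have hK : Finite K := by
    haveI : Finite ↥S := hS.to_subtype
    apply Finite.of_injective (fun k : K => (fun i : S => (k : Ggrp).1 i))
    intro k1 k2 h
    ext j
    by_cases hj : j ∈ S
    · exact congrFun h ⟨j, hj⟩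
    · have h1 : (k1 : Ggrp).1 j = 1 := by
        by_contra hc
        exact hj (k1.2 hc)
      have h2 : (k2 : Ggrp).1 j = 1 := by
        by_contra hc
        exact hj (k2.2 hc)
      rw [h1, h2]
  exact Finite.of_injective (Subgroup.inclusion hle) (Subgroup.inclusion_injective hle)

instance : Group.IsNilpotent Ggrp := by
  haveI : Group.IsNilpotent Hgrp := by
    haveI : Fact (Nat.Prime 2) := ⟨Nat.prime_two⟩
    have hp : IsPGroup 2 Hgrp :=
      IsPGroup.of_card (n := 3) (by rw [DihedralGroup.nat_card]; norm_num)
    exact hp.isNilpotent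
  haveI : Group.IsNilpotent (ℕ → Hgrp) :=
    isNilpotent_pi_of_bounded_class (Gs := fun _ : ℕ => Hgrp)
      (Group.nilpotencyClass Hgrp) (fun _ => le_refl _)
  exact Subgroup.isNilpotent finSupp

/-- There is a group `G`, both locally finite and nilpotent, such that for every
field `F` there are an `F`-linear ring endomorphism `σ` of the group algebra `F[G]` fixing the
center of `F[G]` pointwise and an `F`-linear `(σ, id)`-derivation `δ` of `F[G]` which is not
`(σ, id)`-inner. -/
theorem exists_non_inner_twisted_derivation :
    ∃ (G : Type) (_ : Group G),
      (∀ H : Subgroup G, H.FG → Finite H) ∧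
      Group.IsNilpotent G ∧
      ∀ (F : Type u) [Field F],
        ∃ σ : MonoidAlgebra F G →ₐ[F] MonoidAlgebra F G,
          (∀ x ∈ Subring.center (MonoidAlgebra F G), σ x = x) ∧
          ∃ δ : MonoidAlgebra F G →ₗ[F] MonoidAlgebra F G,
            (∀ a b : MonoidAlgebra F G, δ (a * b) = δ a * b + σ a * δ b) ∧
            ¬ ∃ x : MonoidAlgebra F G, ∀ a : MonoidAlgebra F G, δ a = x * a - σ a * x := by
  refine ⟨Ggrp, inferInstance, Ggrp.locallyFinite, inferInstance, ?_⟩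
  intro F _
  refine ⟨AlgHom.id F _, fun x _ => rfl, deltaMap F, ?_, ?_⟩
  · intro a b
    simpa using deltaMap_leibniz F a b
  · rintro ⟨x, hx⟩
    obtain ⟨n, hn⟩ := Infinite.exists_notMem_finset (x.coeff.support.biUnion fun g => Tg g)
    have hnot : ∀ g ∈ x.coeff.support, n ∉ Tg g := fun g hg hmem =>
      hn (Finset.mem_biUnion.mpr ⟨g, hg, hmem⟩)
    set g₀ : Ggrp := ⟨Pi.mulSingle n (DihedralGroup.sr 0),
      (Set.finite_singleton n).subset Pi.mulSupport_mulSingle_subset⟩ with hg₀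
    -- x commutes with g₀
    have hcommg : ∀ g ∈ x.coeff.support, g * g₀ = g₀ * g := by
      intro g hg
      apply Ggrp.comm
      intro j
      rcases eq_or_ne j n with rfl | hj
      · left
        have := hnot g hg
        rw [mem_Tg] at this
        simpa using this
      · right
        simp [hg₀, Pi.mulSingle_apply, hj]
    have hcomm : x * MonoidAlgebra.of F Ggrp g₀ = MonoidAlgebra.of F Ggrp g₀ * x := by
      conv_lhs => rw [← MonoidAlgebra.sum_coeff_single x]
      conv_rhs => rw [← MonoidAlgebra.sum_coeff_single x]
      simp only [Finsupp.sum, Finset.sum_mul, Finset.mul_sum]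
      refine Finset.sum_congr rfl fun g hg => ?_
      rw [MonoidAlgebra.of_apply, MonoidAlgebra.single_mul_single,
        MonoidAlgebra.single_mul_single, hcommg g hg, mul_comm (x.coeff g) 1]
    have h0 : deltaMap F (MonoidAlgebra.of F Ggrp g₀) = 0 := by
      rw [hx]
      simp only [AlgHom.coe_id, id_eq]
      rw [hcomm, sub_self]
    -- compute deltaMap of g₀ explicitly
    have hTg₀ : Tg g₀ = {n} := by
      ext i
      rw [mem_Tg, Finset.mem_singleton]
      constructor
      · intro hi
        by_contra hc
        exact hi (by simp [hg₀, Pi.mulSingle_apply, hc])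
      · rintro rfl
        simp only [hg₀, Pi.mulSingle_eq_same]
        decide
    have h1 : deltaMap F (MonoidAlgebra.of F Ggrp g₀)
        = MonoidAlgebra.single (tG n * g₀) 1 - MonoidAlgebra.single (g₀ * tG n) 1 := by
      rw [MonoidAlgebra.of_apply]
      show deltaMap F (MonoidAlgebra.single g₀ 1) = _
      rw [deltaMap_single, one_smul, Dmap, hTg₀, sF, Finset.sum_singleton, ← map_mul, ← map_mul,
        MonoidAlgebra.of_apply, MonoidAlgebra.of_apply]
    have hne : tG n * g₀ ≠ g₀ * tG n := by
      intro h
      have := congrFun (congrArg Subtype.val h) n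
      simp only [Subgroup.coe_mul, Pi.mul_apply, tG, hg₀, Pi.mulSingle_eq_same] at this
      exact absurd this (by decide : ¬ (DihedralGroup.r 1 * DihedralGroup.sr 0 : DihedralGroup 4) = DihedralGroup.sr 0 * DihedralGroup.r 1)
    rw [h1] at h0
    have h0' : (MonoidAlgebra.single (tG n * g₀) 1 - MonoidAlgebra.single (g₀ * tG n) 1 : MonoidAlgebra F Ggrp) = 0 := h0
    have := congrArg (fun y : MonoidAlgebra F Ggrp => y.coeff (tG n * g₀)) h0'
    simp only [MonoidAlgebra.coeff_sub, MonoidAlgebra.coeff_single, MonoidAlgebra.coeff_zero] at this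
    rw [Finsupp.sub_apply, Finsupp.single_eq_same, Finsupp.single_eq_of_ne hne] at this
    simp at this
end
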